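/- arXiv:2410.08640 — 2 statements merged into one kernel-verified Lean document; each statement's English description precedes it below -/
import Mathlib

section
/- Let (W,S) be a Coxeter system, X,Y ⊆ S, and u,v ∈ W with uW_Xu⁻¹ = vW_Yv⁻¹, where W_X and W_Y are the standard parabolic subgroups generated by X and Y. Let w₀ be an element of minimal length in the double coset W_Y(v⁻¹u)W_X. Then w₀Xw₀⁻¹ = Y. -/
/-!
**Statement 14.** Let `(W,S)` be a Coxeter system, `X, Y ⊆ S`, and `u, v ∈ W` with
`u W_X u⁻¹ = v W_Y v⁻¹`.  Let `w₀` be an element of minimal length in the double coset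
`W_Y (v⁻¹ u) W_X`.  Then `w₀ X w₀⁻¹ = Y`.
-/

open List

namespace Statement14Aux

attribute [local instance] Classical.propDecidable

section GenericGroup

variable {G : Type*} [Group G] {p b : G}

lemma inv_of_sq (hb : b * b = 1) : b⁻¹ = b := by
  rw [← mul_one b⁻¹, ← hb, ← mul_assoc, inv_mul_cancel, one_mul]

lemma key_pow (hb : b * b = 1) (hpb : b * p * b = p⁻¹) (k : ℤ) :
    b * p ^ k = p ^ (-k) * b := by
  have ib := inv_of_sq hb
  have h1 : b * p * b⁻¹ = p⁻¹ := by rw [ib]; exact hpb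
  have h2 : (b * p * b⁻¹) ^ k = b * p ^ k * b⁻¹ := conj_zpow
  rw [h1, inv_zpow, ← zpow_neg] at h2
  calc b * p ^ k = b * p ^ k * b⁻¹ * b := by group
    _ = p ^ (-k) * b := by rw [← h2]

lemma E1 (hb : b * b = 1) (hpb : b * p * b = p⁻¹) (n : ℤ) (t : G) :
    p ^ n * t * p ^ (-n) = b ↔ t = p ^ (-(2 * n)) * b := by
  constructor
  · intro h
    have ht : t = p ^ (-n) * b * p ^ n := by rw [← h]; group
    rw [ht, mul_assoc, key_pow hb hpb, ← mul_assoc, ← zpow_add]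
    have : -n + -n = -(2 * n) := by ring
    rw [this]
  · rintro rfl
    rw [← mul_assoc, ← zpow_add, mul_assoc, key_pow hb hpb, neg_neg, ← mul_assoc, ← zpow_add]
    have : n + -(2 * n) + n = 0 := by ring
    rw [this, zpow_zero, one_mul]

lemma E2 (hb : b * b = 1) (hpb : b * p * b = p⁻¹) (n : ℤ) (t : G) :
    b * (p ^ n * t * p ^ (-n)) * b = p * b ↔ t = p ^ (-(2 * n + 1)) * b := by
  have hconj : ∀ x y : G, (b * x * b = y) ↔ (x = b * y * b) := by
    intro x y
    constructor
    · intro h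
      rw [← h, ← mul_assoc, ← mul_assoc, hb, one_mul, mul_assoc, hb, mul_one]
    · intro h
      rw [h, ← mul_assoc, ← mul_assoc, hb, one_mul, mul_assoc, hb, mul_one]
  rw [hconj]
  have hbp : b * (p * b) * b = p ^ (-1 : ℤ) * b := by
    calc b * (p * b) * b = b * p * (b * b) := by group
      _ = b * p := by rw [hb, mul_one]
      _ = b * p ^ (1 : ℤ) := by rw [zpow_one]
      _ = p ^ (-1 : ℤ) * b := key_pow hb hpb 1
  rw [hbp]
  constructor
  · intro h
    have ht : t = p ^ (-n) * (p ^ (-1 : ℤ) * b) * p ^ n := by rw [← h]; group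
    rw [ht, ← mul_assoc, ← zpow_add, mul_assoc, key_pow hb hpb, ← mul_assoc, ← zpow_add]
    have : -n + -1 + -n = -(2 * n + 1) := by ring
    rw [this]
  · rintro rfl
    rw [← mul_assoc, ← zpow_add, mul_assoc, key_pow hb hpb, neg_neg, ← mul_assoc, ← zpow_add]
    have : n + -(2 * n + 1) + n = -1 := by ring
    rw [this]

end GenericGroup



lemma comp1 {G : Type*} [Group G] (p t : G) (n : ℤ) :
    p * (p ^ n * t * p ^ (-n)) * p⁻¹ = p ^ (n + 1) * t * p ^ (-(n + 1)) := by
  group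

variable {S W : Type*} [Group W] {M : CoxeterMatrix S} (cs : CoxeterSystem M W)

local prefix:100 "ς" => cs.simple
local prefix:100 "π" => cs.wordProd
local prefix:100 "ℓ" => cs.length

/-- The sign-tracking permutation attached to a simple reflection. -/
noncomputable def muFun (i : S) : W × ℤˣ → W × ℤˣ :=
  fun p => (ς i * p.1 * ς i, if p.1 = ς i then -p.2 else p.2)

lemma conj_simple_eq_simple_iff (i : S) (t : W) :
    ς i * t * ς i = ς i ↔ t = ς i := by
  constructor
  · intro h
    have := congrArg (fun x => ς i * x * ς i) h
    simp only [← mul_assoc, cs.simple_mul_simple_self, one_mul,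
      cs.simple_mul_simple_cancel_right] at this
    exact this
  · rintro rfl
    rw [cs.simple_mul_simple_self, one_mul]

lemma muFun_involutive (i : S) : Function.Involutive (muFun cs i) := by
  rintro ⟨t, ε⟩
  simp only [muFun, conj_simple_eq_simple_iff]
  refine Prod.ext ?_ ?_
  · simp only [← mul_assoc, cs.simple_mul_simple_self, one_mul,
      cs.simple_mul_simple_cancel_right]
  · by_cases h : t = ς i <;> simp [h]

/-- The permutation of `W × ℤˣ` attached to a simple reflection. -/
noncomputable def mu (i : S) : Equiv.Perm (W × ℤˣ) := (muFun_involutive cs i).toPerm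

lemma mu_apply (i : S) (t : W) (ε : ℤˣ) :
    mu cs i (t, ε) = (ς i * t * ς i, if t = ς i then -ε else ε) := rfl

lemma mu_mul_pow_apply (i j : S) (n : ℕ) (t : W) (ε : ℤˣ) :
    ((mu cs i * mu cs j) ^ n) (t, ε) =
      ((ς i * ς j) ^ (n : ℤ) * t * (ς i * ς j) ^ (-(n : ℤ)),
       ε * ∏ r ∈ Finset.range (2 * n),
         (if t = (ς i * ς j) ^ (-(r : ℤ)) * ς j then (-1 : ℤˣ) else 1)) := by
  have hb : ς j * ς j = 1 := cs.simple_mul_simple_self j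
  have hji : ς j * ς i = (ς i * ς j)⁻¹ := by
    rw [mul_inv_rev, cs.inv_simple, cs.inv_simple]
  have hpb : ς j * (ς i * ς j) * ς j = (ς i * ς j)⁻¹ := by
    calc ς j * (ς i * ς j) * ς j = ς j * ς i * (ς j * ς j) := by group
      _ = ς j * ς i := by rw [hb, mul_one]
      _ = (ς i * ς j)⁻¹ := hji
  induction n with
  | zero => simp
  | succ n ih =>
    rw [pow_succ', Equiv.Perm.mul_apply, ih, Equiv.Perm.mul_apply, mu_apply, mu_apply]
    have hc1 := E1 hb hpb (n : ℤ) t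
    have hc2 := E2 hb hpb (n : ℤ) t
    have hpj : ς i * ς j * ς j = ς i := cs.simple_mul_simple_cancel_right j
    rw [hpj] at hc2
    refine Prod.ext ?_ ?_
    · show ς i * (ς j * ((ς i * ς j) ^ (n:ℤ) * t * (ς i * ς j) ^ (-(n:ℤ))) * ς j) * ς i =
        (ς i * ς j) ^ ((n+1 : ℕ) : ℤ) * t * (ς i * ς j) ^ (-((n+1 : ℕ) : ℤ))
      push_cast
      rw [← comp1 (ς i * ς j) t (n:ℤ)]
      calc ς i * (ς j * ((ς i * ς j) ^ (n:ℤ) * t * (ς i * ς j) ^ (-(n:ℤ))) * ς j) * ς i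
          = (ς i * ς j) * ((ς i * ς j) ^ (n:ℤ) * t * (ς i * ς j) ^ (-(n:ℤ))) * (ς j * ς i) := by
            group
        _ = (ς i * ς j) * ((ς i * ς j) ^ (n:ℤ) * t * (ς i * ς j) ^ (-(n:ℤ))) *
              (ς i * ς j)⁻¹ := by rw [hji]
    · show (if ς j * ((ς i * ς j) ^ (n:ℤ) * t * (ς i * ς j) ^ (-(n:ℤ))) * ς j = ς i then
          -(if (ς i * ς j) ^ (n:ℤ) * t * (ς i * ς j) ^ (-(n:ℤ)) = ς j
            then -(ε * ∏ r ∈ Finset.range (2 * n),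
              (if t = (ς i * ς j) ^ (-(r : ℤ)) * ς j then (-1 : ℤˣ) else 1))
            else ε * ∏ r ∈ Finset.range (2 * n),
              (if t = (ς i * ς j) ^ (-(r : ℤ)) * ς j then (-1 : ℤˣ) else 1))
          else (if (ς i * ς j) ^ (n:ℤ) * t * (ς i * ς j) ^ (-(n:ℤ)) = ς j
            then -(ε * ∏ r ∈ Finset.range (2 * n),
              (if t = (ς i * ς j) ^ (-(r : ℤ)) * ς j then (-1 : ℤˣ) else 1))
            else ε * ∏ r ∈ Finset.range (2 * n),
              (if t = (ς i * ς j) ^ (-(r : ℤ)) * ς j then (-1 : ℤˣ) else 1))) =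
        ε * ∏ r ∈ Finset.range (2 * (n + 1)),
          (if t = (ς i * ς j) ^ (-(r : ℤ)) * ς j then (-1 : ℤˣ) else 1)
      rw [show 2 * (n + 1) = (2 * n + 1) + 1 by ring, Finset.prod_range_succ,
        Finset.prod_range_succ, hc1, hc2]
      have e1 : (((2 * n : ℕ)) : ℤ) = 2 * (n : ℤ) := by push_cast; ring
      have e2 : (((2 * n + 1 : ℕ)) : ℤ) = 2 * (n : ℤ) + 1 := by push_cast; ring
      rw [e1, e2]
      by_cases hA : t = (ς i * ς j) ^ (-(2 * (n:ℤ))) * ς j <;>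
        by_cases hB : t = (ς i * ς j) ^ (-(2 * (n:ℤ) + 1)) * ς j <;>
          simp [hA, hB] <;> ring

lemma mu_liftable : M.IsLiftable (mu cs) := by
  intro i j
  apply Equiv.ext
  rintro ⟨t, ε⟩
  rw [mu_mul_pow_apply]
  have hm : (ς i * ς j) ^ (M i j) = 1 := cs.simple_mul_simple_pow i j
  have hmz : (ς i * ς j) ^ ((M i j : ℕ) : ℤ) = 1 := by rw [zpow_natCast, hm]
  have hper : ∀ r : ℕ, ((ς i * ς j) : W) ^ (-(((M i j + r : ℕ)) : ℤ)) =
      (ς i * ς j) ^ (-(r : ℤ)) := by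
    intro r
    push_cast
    rw [neg_add, zpow_add, zpow_neg, hmz, inv_one, one_mul]
  have hsign : (∏ r ∈ Finset.range (2 * M i j),
      (if t = (ς i * ς j) ^ (-(r : ℤ)) * ς j then (-1 : ℤˣ) else 1)) = 1 := by
    rw [two_mul, Finset.prod_range_add]
    have : ∀ r : ℕ, (if t = (ς i * ς j) ^ (-((M i j + r : ℕ) : ℤ)) * ς j then (-1 : ℤˣ) else 1) =
        (if t = (ς i * ς j) ^ (-(r : ℤ)) * ς j then (-1 : ℤˣ) else 1) := by
      intro r
      rw [hper r]
    rw [Finset.prod_congr rfl (fun r _ => this r)]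
    exact Int.units_mul_self _
  rw [hsign, hmz]
  simp

/-- The sign homomorphism into permutations of `W × ℤˣ`. -/
noncomputable def phi : W →* Equiv.Perm (W × ℤˣ) := cs.lift ⟨mu cs, mu_liftable cs⟩

lemma phi_simple (i : S) : phi cs (ς i) = mu cs i := cs.lift_apply_simple (mu_liftable cs) i

lemma phi_wordProd (ω : List S) (t : W) (ε : ℤˣ) :
    phi cs (π ω) (t, ε) =
      (π ω * t * (π ω)⁻¹,
       ε * ((cs.rightInvSeq ω).map (fun u => if t = u then (-1 : ℤˣ) else 1)).prod) := by
  induction ω with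
  | nil => simp [CoxeterSystem.rightInvSeq]
  | cons i ω ih =>
    rw [cs.wordProd_cons, map_mul, Equiv.Perm.mul_apply, ih, phi_simple, mu_apply]
    have hris : cs.rightInvSeq (i :: ω) = ((π ω)⁻¹ * ς i * π ω) :: cs.rightInvSeq ω := rfl
    rw [hris]
    refine Prod.ext ?_ ?_
    · show ς i * (π ω * t * (π ω)⁻¹) * ς i = (ς i * π ω) * t * (ς i * π ω)⁻¹
      rw [mul_inv_rev, cs.inv_simple]
      group
    · show (if π ω * t * (π ω)⁻¹ = ς i then
          -(ε * ((cs.rightInvSeq ω).map (fun u => if t = u then (-1 : ℤˣ) else 1)).prod)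
          else ε * ((cs.rightInvSeq ω).map (fun u => if t = u then (-1 : ℤˣ) else 1)).prod) =
        ε * ((((π ω)⁻¹ * ς i * π ω) :: cs.rightInvSeq ω).map
          (fun u => if t = u then (-1 : ℤˣ) else 1)).prod
      have hcond : (π ω * t * (π ω)⁻¹ = ς i) ↔ (t = (π ω)⁻¹ * ς i * π ω) := by
        constructor
        · intro h; rw [← h]; group
        · intro h; rw [h]; group
      rw [List.map_cons, List.prod_cons]
      by_cases h : t = (π ω)⁻¹ * ς i * π ω
      · rw [if_pos (hcond.mpr h), if_pos h, neg_one_mul, mul_neg]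
      · rw [if_neg (fun hc => h (hcond.mp hc)), if_neg h, one_mul]

/-- The sign of a "reflection" `t` with respect to `w`. -/
noncomputable def eta (w t : W) : ℤˣ := (phi cs w (t, 1)).2

lemma phi_apply (w t : W) (ε : ℤˣ) : phi cs w (t, ε) = (w * t * w⁻¹, ε * eta cs w t) := by
  obtain ⟨ω, rfl⟩ := cs.wordProd_surjective w
  rw [phi_wordProd]
  have : eta cs (π ω) t =
      ((cs.rightInvSeq ω).map (fun u => if t = u then (-1 : ℤˣ) else 1)).prod := by
    rw [eta, phi_wordProd, one_mul]
  rw [this]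

lemma eta_wordProd (ω : List S) (t : W) :
    eta cs (π ω) t = ((cs.rightInvSeq ω).map (fun u => if t = u then (-1 : ℤˣ) else 1)).prod := by
  rw [eta, phi_wordProd, one_mul]

lemma eta_mul (w₁ w₂ t : W) : eta cs (w₁ * w₂) t = eta cs w₁ (w₂ * t * w₂⁻¹) * eta cs w₂ t := by
  have h := congrArg (fun f => f (t, (1 : ℤˣ))) (map_mul (phi cs) w₁ w₂)
  simp only [Equiv.Perm.mul_apply] at h
  rw [phi_apply, phi_apply, phi_apply] at h
  have := congrArg Prod.snd h
  simp only at this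
  rw [one_mul, one_mul] at this
  rw [this, mul_comm]

lemma eta_one_left (t : W) : eta cs 1 t = 1 := by
  rw [eta, map_one]
  rfl

lemma eta_simple_self (i : S) : eta cs (ς i) (ς i) = -1 := by
  rw [eta, phi_simple, mu_apply, if_pos rfl]

lemma eta_refl_self {t : W} (ht : cs.IsReflection t) : eta cs t t = -1 := by
  obtain ⟨w, i, rfl⟩ := ht
  set t := w * ς i * w⁻¹ with hteq
  have h1 : eta cs t t = eta cs w ((ς i * w⁻¹) * t * (ς i * w⁻¹)⁻¹) * eta cs (ς i * w⁻¹) t := by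
    rw [hteq, show w * ς i * w⁻¹ = w * (ς i * w⁻¹) by group, ← eta_mul]
  have e1 : (ς i * w⁻¹) * t * (ς i * w⁻¹)⁻¹ = ς i := by rw [hteq]; group
  have e2 : w⁻¹ * t * (w⁻¹)⁻¹ = ς i := by rw [hteq]; group
  have h2 : eta cs (ς i * w⁻¹) t = eta cs (ς i) (w⁻¹ * t * (w⁻¹)⁻¹) * eta cs w⁻¹ t :=
    eta_mul cs (ς i) w⁻¹ t
  have h3 : (1 : ℤˣ) = eta cs w (w⁻¹ * t * (w⁻¹)⁻¹) * eta cs w⁻¹ t := by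
    rw [← eta_mul, mul_inv_cancel, eta_one_left]
  rw [e2] at h2 h3
  have h4 := h3.symm
  rw [h1, e1, h2, eta_simple_self, neg_one_mul, mul_neg, h4]

lemma eta_eq_one_of_lt {w t : W} (ht : cs.IsReflection t) (h : ℓ w < ℓ (w * t)) :
    eta cs w t = 1 := by
  rcases Int.units_eq_one_or (eta cs w t) with h1 | h1
  · exact h1
  exfalso
  obtain ⟨ω, hred, rfl⟩ := cs.exists_reduced_word' w
  have hmem : t ∈ cs.rightInvSeq ω := by
    by_contra hmem
    have : eta cs (π ω) t = 1 := by
      rw [eta_wordProd]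
      apply List.prod_eq_one
      intro x hx
      obtain ⟨u, hu, rfl⟩ := List.mem_map.mp hx
      rw [if_neg]
      rintro rfl
      exact hmem hu
    rw [this] at h1
    exact absurd h1 (by decide)
  have := (cs.isRightInversion_of_mem_rightInvSeq hred hmem).2
  omega

lemma eta_eq_neg_one_of_lt {w t : W} (ht : cs.IsReflection t) (h : ℓ (w * t) < ℓ w) :
    eta cs w t = -1 := by
  have key : eta cs ((w * t) * t) t = eta cs (w * t) (t * t * t⁻¹) * eta cs t t :=
    eta_mul cs (w * t) t t
  have e1 : (w * t) * t = w := by rw [mul_assoc, ht.mul_self, mul_one]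
  have e2 : t * t * t⁻¹ = t := by rw [ht.mul_self, one_mul, ht.inv]
  rw [e1, e2, eta_refl_self cs ht] at key
  have e3 : eta cs (w * t) t = 1 := by
    apply eta_eq_one_of_lt cs ht
    rw [e1]
    exact h
  rw [key, e3, one_mul]

lemma mem_rightInvSeq_of_eta {ω : List S} {t : W} (h : eta cs (π ω) t = -1) :
    t ∈ cs.rightInvSeq ω := by
  by_contra hmem
  rw [eta_wordProd] at h
  rw [List.prod_eq_one ?_] at h
  · exact absurd h (by decide)
  intro x hx
  obtain ⟨u, hu, rfl⟩ := List.mem_map.mp hx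
  rw [if_neg]
  rintro rfl
  exact hmem hu

/-- The right exchange property. -/
lemma right_exchange {ω : List S} (hred : cs.IsReduced ω) {i : S}
    (h : ℓ (π ω * ς i) < ℓ (π ω)) :
    ∃ j < ω.length, π ω * ς i = π (ω.eraseIdx j) := by
  have heta := eta_eq_neg_one_of_lt cs (cs.isReflection_simple i) h
  have hmem := mem_rightInvSeq_of_eta cs heta
  obtain ⟨j, hj, hget⟩ := List.mem_iff_getElem.mp hmem
  rw [cs.length_rightInvSeq] at hj
  refine ⟨j, hj, ?_⟩
  have hD : (cs.rightInvSeq ω).getD j 1 = ς i := by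
    rw [List.getD_eq_getElem _ _ (by rw [cs.length_rightInvSeq]; exact hj)]
    exact hget
  rw [← hD]
  exact cs.wordProd_mul_getD_rightInvSeq ω j

/-- The left exchange property. -/
lemma left_exchange {ω : List S} (hred : cs.IsReduced ω) {i : S}
    (h : ℓ (ς i * π ω) < ℓ (π ω)) :
    ∃ j < ω.length, ς i * π ω = π (ω.eraseIdx j) := by
  have h' : ℓ (π ω.reverse * ς i) < ℓ (π ω.reverse) := by
    rw [cs.wordProd_reverse]
    have e1 : (π ω)⁻¹ * ς i = (ς i * π ω)⁻¹ := by
      rw [mul_inv_rev, cs.inv_simple]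
    rw [e1, cs.length_inv, cs.length_inv]
    exact h
  have heta := eta_eq_neg_one_of_lt cs (cs.isReflection_simple i) h'
  have hmem := mem_rightInvSeq_of_eta cs heta
  rw [cs.rightInvSeq_reverse, List.mem_reverse] at hmem
  obtain ⟨j, hj, hget⟩ := List.mem_iff_getElem.mp hmem
  rw [cs.length_leftInvSeq] at hj
  refine ⟨j, hj, ?_⟩
  have hD : (cs.leftInvSeq ω).getD j 1 = ς i := by
    rw [List.getD_eq_getElem _ _ (by rw [cs.length_leftInvSeq]; exact hj)]
    exact hget
  rw [← hD]
  exact cs.getD_leftInvSeq_mul_wordProd ω j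

/-- Deletion: every word contains a reduced sublist-word with the same product. -/
lemma exists_reduced_sublist (n : ℕ) :
    ∀ ω : List S, ω.length ≤ n → ∃ ω', ω' <+ ω ∧ cs.IsReduced ω' ∧ π ω' = π ω := by
  induction n with
  | zero =>
    intro ω hω
    rw [Nat.le_zero, List.length_eq_zero_iff] at hω
    subst hω
    exact ⟨[], List.Sublist.refl _, by simp [CoxeterSystem.IsReduced], rfl⟩
  | succ n ih =>
    intro ω hω
    by_cases hred : cs.IsReduced ω
    · exact ⟨ω, List.Sublist.refl _, hred, rfl⟩
    have hne : ω ≠ [] := by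
      rintro rfl
      exact hred (by simp [CoxeterSystem.IsReduced])
    have hlen1 : 1 ≤ ω.length := by
      cases ω
      · exact absurd rfl hne
      · simp
    -- find the first non-reduced prefix
    have hex : ∃ k, ¬ cs.IsReduced (ω.take (k + 1)) := by
      refine ⟨ω.length - 1, ?_⟩
      rwa [Nat.sub_add_cancel hlen1, List.take_length]
    classical
    set k := Nat.find hex with hkdef
    have hk : ¬ cs.IsReduced (ω.take (k + 1)) := Nat.find_spec hex
    have hmin : ∀ k' < k, cs.IsReduced (ω.take (k' + 1)) := by
      intro k' hk'
      by_contra hc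
      have hle : Nat.find hex ≤ k' := Nat.find_le hc
      omega
    have hklt : k < ω.length := by
      have hle : Nat.find hex ≤ ω.length - 1 :=
        Nat.find_le (by rwa [Nat.sub_add_cancel hlen1, List.take_length])
      omega
    have htk : cs.IsReduced (ω.take k) := by
      rcases Nat.eq_zero_or_pos k with h0 | h0
      · rw [h0]
        simp [CoxeterSystem.IsReduced]
      · have := hmin (k - 1) (by omega)
        rwa [Nat.sub_add_cancel h0] at this
    have htake : (ω.take k).concat ω[k] = ω.take (k + 1) := List.take_concat_get hklt
    have hpi : π (ω.take (k + 1)) = π (ω.take k) * ς ω[k] := by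
      rw [← htake, cs.wordProd_concat]
    have hlength_take : (ω.take k).length = k := by
      rw [List.length_take]
      omega
    have hlt : ℓ (π (ω.take k) * ς ω[k]) < ℓ (π (ω.take k)) := by
      have hne2 : ℓ (π (ω.take (k + 1))) ≠ (ω.take (k + 1)).length := hk
      have hlen2 : (ω.take (k + 1)).length = k + 1 := by
        rw [List.length_take]
        omega
      have hr : ℓ (π (ω.take k)) = k := by
        have := htk
        rwa [CoxeterSystem.IsReduced, hlength_take] at this
      rcases cs.length_mul_simple (π (ω.take k)) ω[k] with hc | hc
      · exfalso
        rw [hpi, hlen2] at hne2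
        omega
      · omega
    obtain ⟨j, hj, heq⟩ := right_exchange cs htk hlt
    set ω'' := (ω.take k).eraseIdx j ++ ω.drop (k + 1) with hω''
    have hπ : π ω'' = π ω := by
      rw [hω'', cs.wordProd_append, ← heq, ← hpi, ← cs.wordProd_append,
        List.take_append_drop]
    have hsub : ω'' <+ ω := by
      have h1 : (ω.take k).eraseIdx j <+ ω.take k := List.eraseIdx_sublist _ _
      have h2 : ω.take k <+ ω.take (k + 1) := by
        have := List.take_sublist k (ω.take (k + 1))
        rwa [List.take_take, min_eq_left (by omega)] at this
      have h3 : ω'' <+ ω.take (k + 1) ++ ω.drop (k + 1) :=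
        List.Sublist.append (h1.trans h2) (List.Sublist.refl _)
      rwa [List.take_append_drop] at h3
    have hlen'' : ω''.length ≤ n := by
      have h1 : ((ω.take k).eraseIdx j).length = k - 1 := by
        rw [List.length_eraseIdx, hlength_take, if_pos (by omega)]
      have h2 : (ω.drop (k + 1)).length = ω.length - (k + 1) := List.length_drop
      rw [hω'', List.length_append, h1, h2]
      omega
    obtain ⟨ω', h1, h2, h3⟩ := ih ω'' hlen''
    exact ⟨ω', h1.trans hsub, h2, h3.trans hπ⟩

/-- Membership in a standard parabolic subgroup via words. -/
lemma mem_closure_iff {Z : Set S} {w : W} :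
    w ∈ Subgroup.closure (cs.simple '' Z) ↔ ∃ ω : List S, (∀ x ∈ ω, x ∈ Z) ∧ w = π ω := by
  constructor
  · intro hw
    induction hw using Subgroup.closure_induction with
    | mem x hx =>
      obtain ⟨z, hz, rfl⟩ := hx
      exact ⟨[z], by simpa using hz, (cs.wordProd_singleton z).symm⟩
    | one => exact ⟨[], by simp, by simp⟩
    | mul x y hx hy ihx ihy =>
      obtain ⟨ωx, hωx, rfl⟩ := ihx
      obtain ⟨ωy, hωy, rfl⟩ := ihy
      refine ⟨ωx ++ ωy, ?_, (cs.wordProd_append ωx ωy).symm⟩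
      intro z hz
      rcases List.mem_append.mp hz with h | h
      · exact hωx z h
      · exact hωy z h
    | inv x hx ihx =>
      obtain ⟨ωx, hωx, rfl⟩ := ihx
      refine ⟨ωx.reverse, ?_, (cs.wordProd_reverse ωx).symm⟩
      intro z hz
      exact hωx z (List.mem_reverse.mp hz)
  · rintro ⟨ω, hsub, rfl⟩
    induction ω with
    | nil =>
      rw [cs.wordProd_nil]
      exact one_mem _
    | cons x ω ihω =>
      rw [cs.wordProd_cons]
      refine mul_mem ?_ (ihω (fun z hz => hsub z (List.mem_cons_of_mem x hz)))
      exact Subgroup.subset_closure ⟨x, hsub x List.mem_cons_self, rfl⟩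

lemma mem_closure_iff_reduced {Z : Set S} {w : W} :
    w ∈ Subgroup.closure (cs.simple '' Z) ↔
      ∃ ω : List S, cs.IsReduced ω ∧ (∀ x ∈ ω, x ∈ Z) ∧ w = π ω := by
  constructor
  · intro hw
    obtain ⟨ω, hsub, rfl⟩ := (mem_closure_iff cs).mp hw
    obtain ⟨ω', h1, h2, h3⟩ := exists_reduced_sublist cs ω.length ω le_rfl
    exact ⟨ω', h2, fun x hx => hsub x (h1.subset hx), h3.symm⟩
  · rintro ⟨ω, _, hsub, rfl⟩
    exact (mem_closure_iff cs).mpr ⟨ω, hsub, rfl⟩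

lemma simple_mem_closure_iff {Z : Set S} {i : S}
    (h : ς i ∈ Subgroup.closure (cs.simple '' Z)) : ς i ∈ cs.simple '' Z := by
  obtain ⟨ω, hred, hsub, heq⟩ := (mem_closure_iff_reduced cs).mp h
  have hlen : ω.length = 1 := by
    have := hred
    rw [CoxeterSystem.IsReduced, ← heq, cs.length_simple] at this
    omega
  obtain ⟨z, rfl⟩ := List.length_eq_one_iff.mp hlen
  rw [cs.wordProd_singleton] at heq
  exact ⟨z, hsub z List.mem_cons_self, heq.symm⟩

/-- If `d` has minimal length in its coset `W_Z d`, then lengths add. -/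
lemma length_min_coset_add {Z : Set S} {d : W}
    (hd : ∀ a ∈ Subgroup.closure (cs.simple '' Z), ℓ d ≤ ℓ (a * d)) :
    ∀ a ∈ Subgroup.closure (cs.simple '' Z), ℓ (a * d) = ℓ a + ℓ d := by
  suffices H : ∀ n : ℕ, ∀ a ∈ Subgroup.closure (cs.simple '' Z), ℓ a = n → ℓ (a * d) = ℓ a + ℓ d by
    intro a ha
    exact H (ℓ a) a ha rfl
  intro n
  induction n using Nat.strong_induction_on with
  | _ n ih =>
    intro a ha hlen
    obtain ⟨α, hαred, hαZ, rfl⟩ := (mem_closure_iff_reduced cs).mp ha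
    cases α with
    | nil => simp
    | cons x α' =>
      have hx : x ∈ Z := hαZ x List.mem_cons_self
      have hα'Z : ∀ z ∈ α', z ∈ Z := fun z hz => hαZ z (List.mem_cons_of_mem x hz)
      have hα'red : cs.IsReduced α' := by
        have := CoxeterSystem.IsReduced.drop hαred 1
        simpa using this
      have ha' : π α' ∈ Subgroup.closure (cs.simple '' Z) :=
        (mem_closure_iff cs).mpr ⟨α', hα'Z, rfl⟩
      have hla : ℓ (π (x :: α')) = α'.length + 1 := by
        have := hαred
        rw [CoxeterSystem.IsReduced] at this
        simpa using this
      have hla' : ℓ (π α') = α'.length := hα'red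
      have hih : ℓ (π α' * d) = ℓ (π α') + ℓ d :=
        ih (ℓ (π α')) (by omega) (π α') ha' rfl
      obtain ⟨δ, hδlen, hδeq⟩ := cs.exists_reduced_word d
      have hδlen' : δ.length = ℓ d := by rw [hδeq]; exact (hδlen : ℓ (π δ) = δ.length).symm
      have hαδred : cs.IsReduced (α' ++ δ) := by
        rw [CoxeterSystem.IsReduced, cs.wordProd_append, ← hδeq, List.length_append, hδlen', hih,
          hla']
      have hcons : π (x :: α') = ς x * π α' := cs.wordProd_cons x α'
      have hla2 : ℓ (ς x * π α') = α'.length + 1 := by rw [← hcons]; exact hla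
      rcases cs.length_simple_mul (π α' * d) x with hc | hc
      · rw [hcons, mul_assoc, hc, hih, hla', hla2]
        omega
      · exfalso
        -- ℓ (ς x * (π α' * d)) < ℓ (π α' * d) : apply the left exchange property
        have hlt : ℓ (ς x * π (α' ++ δ)) < ℓ (π (α' ++ δ)) := by
          rw [cs.wordProd_append, ← hδeq]
          omega
        obtain ⟨j, hj, heq⟩ := left_exchange cs hαδred hlt
        rcases Nat.lt_or_ge j α'.length with hjlt | hjge
        · -- the deleted letter is in α' : contradiction with reducedness of x :: α'
          rw [List.eraseIdx_append_of_lt_length hjlt] at heq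
          rw [cs.wordProd_append, cs.wordProd_append, ← hδeq, ← mul_assoc] at heq
          have heq2 : ς x * π α' = π (α'.eraseIdx j) := mul_right_cancel heq
          have hlen2 : ℓ (ς x * π α') ≤ (α'.eraseIdx j).length := by
            rw [heq2]
            exact cs.length_wordProd_le _
          rw [List.length_eraseIdx, if_pos hjlt] at hlen2
          rw [hcons] at hla
          omega
        · -- the deleted letter is in δ : contradiction with minimality of d
          rw [List.eraseIdx_append_of_length_le hjge] at heq
          rw [cs.wordProd_append, cs.wordProd_append, ← hδeq] at heq
          have hjδ : j - α'.length < δ.length := by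
            rw [List.length_append] at hj
            omega
          have hd'short : ℓ (π (δ.eraseIdx (j - α'.length))) ≤ δ.length - 1 := by
            have := cs.length_wordProd_le (δ.eraseIdx (j - α'.length))
            rwa [List.length_eraseIdx, if_pos hjδ] at this
          have ha0 : (π α')⁻¹ * ς x * π α' ∈ Subgroup.closure (cs.simple '' Z) := by
            refine mul_mem (mul_mem (inv_mem ha') ?_) ha'
            exact Subgroup.subset_closure ⟨x, hx, rfl⟩
          have hmin := hd ((π α')⁻¹ * ς x * π α') ha0
          have hd'eq : (π α')⁻¹ * ς x * π α' * d = π (δ.eraseIdx (j - α'.length)) := by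
            have h2 : (π α')⁻¹ * (ς x * (π α' * d)) = π (δ.eraseIdx (j - α'.length)) := by
              rw [heq]
              group
            rw [← h2]
            group
          rw [hd'eq] at hmin
          omega


end Statement14Aux

open Statement14Aux

theorem statement14 {S W : Type*} [Group W] {M : CoxeterMatrix S}
    (cs : CoxeterSystem M W) (X Y : Set S) (u v w₀ : W)
    (hconj : Subgroup.map (MulAut.conj u).toMonoidHom (Subgroup.closure (cs.simple '' X)) =
      Subgroup.map (MulAut.conj v).toMonoidHom (Subgroup.closure (cs.simple '' Y)))
    (hmem : w₀ ∈ {g : W | ∃ a ∈ Subgroup.closure (cs.simple '' Y),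
      ∃ b ∈ Subgroup.closure (cs.simple '' X), g = a * (v⁻¹ * u) * b})
    (hmin : ∀ g ∈ {g : W | ∃ a ∈ Subgroup.closure (cs.simple '' Y),
      ∃ b ∈ Subgroup.closure (cs.simple '' X), g = a * (v⁻¹ * u) * b},
      cs.length w₀ ≤ cs.length g) :
    (fun g : W => w₀ * g * w₀⁻¹) '' (cs.simple '' X) = cs.simple '' Y := by
  classical
  obtain ⟨a, ha, b, hb, hw₀⟩ := hmem
  have hmap : ∀ (c : W) (H : Subgroup W) (g : W),
      c * g * c⁻¹ ∈ Subgroup.map (MulAut.conj c).toMonoidHom H ↔ g ∈ H := by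
    intro c H g
    constructor
    · rintro ⟨g', hg', hgg⟩
      simp only [MulEquiv.coe_toMonoidHom, MulAut.conj_apply] at hgg
      have hg'g : g' = g := by
        have h2 := congrArg (fun x => c⁻¹ * x * c) hgg
        calc g' = c⁻¹ * (c * g' * c⁻¹) * c := by group
          _ = c⁻¹ * (c * g * c⁻¹) * c := by rw [h2]
          _ = g := by group
      rwa [← hg'g]
    · intro hg
      exact ⟨g, hg, by simp [MulAut.conj_apply]⟩
  have hvu : ∀ g : W, g ∈ Subgroup.closure (cs.simple '' X) ↔
      (v⁻¹ * u) * g * (v⁻¹ * u)⁻¹ ∈ Subgroup.closure (cs.simple '' Y) := by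
    intro g
    constructor
    · intro hg
      have h1 : v * ((v⁻¹ * u) * g * (v⁻¹ * u)⁻¹) * v⁻¹ ∈
          Subgroup.map (MulAut.conj v).toMonoidHom (Subgroup.closure (cs.simple '' Y)) := by
        rw [show v * ((v⁻¹ * u) * g * (v⁻¹ * u)⁻¹) * v⁻¹ = u * g * u⁻¹ by group, ← hconj]
        exact (hmap u _ g).mpr hg
      exact (hmap v _ _).mp h1
    · intro hg
      have h1 : u * g * u⁻¹ ∈
          Subgroup.map (MulAut.conj u).toMonoidHom (Subgroup.closure (cs.simple '' X)) := by
        rw [hconj, show (u : W) * g * u⁻¹ = v * ((v⁻¹ * u) * g * (v⁻¹ * u)⁻¹) * v⁻¹ by group]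
        exact (hmap v _ _).mpr hg
      exact (hmap u _ g).mp h1
  have hw0conj : ∀ g : W, g ∈ Subgroup.closure (cs.simple '' X) ↔
      w₀ * g * w₀⁻¹ ∈ Subgroup.closure (cs.simple '' Y) := by
    intro g
    rw [hw₀]
    constructor
    · intro hg
      have h1 : b * g * b⁻¹ ∈ Subgroup.closure (cs.simple '' X) :=
        mul_mem (mul_mem hb hg) (inv_mem hb)
      have h2 := (hvu _).mp h1
      have h3 : a * ((v⁻¹ * u) * (b * g * b⁻¹) * (v⁻¹ * u)⁻¹) * a⁻¹ ∈
          Subgroup.closure (cs.simple '' Y) := mul_mem (mul_mem ha h2) (inv_mem ha)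
      rwa [show a * ((v⁻¹ * u) * (b * g * b⁻¹) * (v⁻¹ * u)⁻¹) * a⁻¹ =
        (a * (v⁻¹ * u) * b) * g * (a * (v⁻¹ * u) * b)⁻¹ by group] at h3
    · intro hg
      have h3 : a⁻¹ * ((a * (v⁻¹ * u) * b) * g * (a * (v⁻¹ * u) * b)⁻¹) * a ∈
          Subgroup.closure (cs.simple '' Y) := mul_mem (mul_mem (inv_mem ha) hg) ha
      rw [show a⁻¹ * ((a * (v⁻¹ * u) * b) * g * (a * (v⁻¹ * u) * b)⁻¹) * a =
        (v⁻¹ * u) * (b * g * b⁻¹) * (v⁻¹ * u)⁻¹ by group] at h3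
      have h1 := (hvu _).mpr h3
      have h2 : b⁻¹ * (b * g * b⁻¹) * b ∈ Subgroup.closure (cs.simple '' X) :=
        mul_mem (mul_mem (inv_mem hb) h1) hb
      rwa [show b⁻¹ * (b * g * b⁻¹) * b = g by group] at h2
  have hminL : ∀ a' ∈ Subgroup.closure (cs.simple '' Y), cs.length w₀ ≤ cs.length (a' * w₀) := by
    intro a' ha'
    exact hmin _ ⟨a' * a, mul_mem ha' ha, b, hb, by rw [hw₀]; group⟩
  have hminR : ∀ b' ∈ Subgroup.closure (cs.simple '' X), cs.length w₀ ≤ cs.length (w₀ * b') := by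
    intro b' hb'
    exact hmin _ ⟨a, ha, b * b', mul_mem hb hb', by rw [hw₀]; group⟩
  have hminX : ∀ b' ∈ Subgroup.closure (cs.simple '' X),
      cs.length w₀⁻¹ ≤ cs.length (b' * w₀⁻¹) := by
    intro b' hb'
    have h1 := hminR b'⁻¹ (inv_mem hb')
    calc cs.length w₀⁻¹ = cs.length w₀ := cs.length_inv w₀
      _ ≤ cs.length (w₀ * b'⁻¹) := h1
      _ = cs.length ((b' * w₀⁻¹)⁻¹) := by rw [show (w₀ * b'⁻¹ : W) = (b' * w₀⁻¹)⁻¹ by group]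
      _ = cs.length (b' * w₀⁻¹) := cs.length_inv _
  have claim1 : ∀ x ∈ X, w₀ * cs.simple x * w₀⁻¹ ∈ cs.simple '' Y := by
    intro x hx
    have hsx : cs.simple x ∈ Subgroup.closure (cs.simple '' X) :=
      Subgroup.subset_closure ⟨x, hx, rfl⟩
    have hp : w₀ * cs.simple x * w₀⁻¹ ∈ Subgroup.closure (cs.simple '' Y) :=
      (hw0conj _).mp hsx
    have hl : cs.length (w₀ * cs.simple x) = cs.length w₀ + 1 := by
      rcases cs.length_mul_simple w₀ x with h | h
      · exact h
      · have := hminR _ hsx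
        omega
    have hadd := length_min_coset_add cs hminL _ hp
    rw [show (w₀ * cs.simple x * w₀⁻¹) * w₀ = w₀ * cs.simple x by group, hl] at hadd
    have hp1 : cs.length (w₀ * cs.simple x * w₀⁻¹) = 1 := by
      have := cs.length_inv w₀
      omega
    obtain ⟨k, hk⟩ := cs.length_eq_one_iff.mp hp1
    rw [hk]
    exact simple_mem_closure_iff cs (hk ▸ hp)
  have claim2 : ∀ y ∈ Y, w₀⁻¹ * cs.simple y * w₀ ∈ cs.simple '' X := by
    intro y hy
    have hsy : cs.simple y ∈ Subgroup.closure (cs.simple '' Y) :=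
      Subgroup.subset_closure ⟨y, hy, rfl⟩
    have hq : w₀⁻¹ * cs.simple y * w₀ ∈ Subgroup.closure (cs.simple '' X) := by
      apply (hw0conj _).mpr
      rwa [show w₀ * (w₀⁻¹ * cs.simple y * w₀) * w₀⁻¹ = cs.simple y by group]
    have hly : cs.length (cs.simple y * w₀) = cs.length w₀ + 1 := by
      rcases cs.length_simple_mul w₀ y with h | h
      · exact h
      · have := hminL _ hsy
        omega
    have hadd := length_min_coset_add cs hminX _ hq
    have he1 : (w₀⁻¹ * cs.simple y * w₀) * w₀⁻¹ = w₀⁻¹ * cs.simple y := by group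
    have he2 : cs.length (w₀⁻¹ * cs.simple y) = cs.length w₀ + 1 := by
      rw [show (w₀⁻¹ * cs.simple y : W) = (cs.simple y * w₀)⁻¹ by rw [mul_inv_rev, cs.inv_simple],
        cs.length_inv, hly]
    rw [he1, he2] at hadd
    have hq1 : cs.length (w₀⁻¹ * cs.simple y * w₀) = 1 := by
      have := cs.length_inv w₀
      omega
    obtain ⟨k, hk⟩ := cs.length_eq_one_iff.mp hq1
    rw [hk]
    exact simple_mem_closure_iff cs (hk ▸ hq)
  apply Set.Subset.antisymm
  · rintro g ⟨g', ⟨x, hx, rfl⟩, rfl⟩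
    exact claim1 x hx
  · rintro g ⟨y, hy, rfl⟩
    obtain ⟨x, hx, hxe⟩ := claim2 y hy
    refine ⟨cs.simple x, ⟨x, hx, rfl⟩, ?_⟩
    show w₀ * cs.simple x * w₀⁻¹ = cs.simple y
    rw [hxe]
    group
end

section
/- Assume m_{s,t} ∈ {2,3} for all distinct s,t ∈ S. Let β,β' ∈ Φ be roots such that the reflections r_β and r_{β'} are distinct and commute: r_β r_{β'} = r_{β'} r_β. Then there exist w ∈ W and s,t ∈ S such that β = w(α_s) and β' = w(α_t). -/
/-!
Context: `(W, S)` is a Coxeter system for the Coxeter matrix `M` (Mathlib's convention: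
the entry `0` encodes `∞`).  `V = ⊕_{s ∈ S} ℝ·α_s` is realized as `S →₀ ℝ` with
`α_s = simpleRoot s`, equipped with the canonical symmetric bilinear form `bform M`.
The canonical faithful form-preserving representation `ρ : W →* GL(V)` and the map
`β ↦ r_β` assigning to each root its reflection are given as data, characterized by
the usual formulas (`hρ`, `hρinj`, `hρform`, `hr` below).
-/

noncomputable section

open scoped Real Pointwise

variable {S W : Type*}

/-- The simple root `α_s`. -/
def simpleRoot (s : S) : S →₀ ℝ := Finsupp.single s 1

/-- The entry `⟨α_s, α_t⟩ = -cos (π / m_{s,t})` of the canonical bilinear form,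
interpreted as `-1` when `m_{s,t} = ∞` (encoded by `0`). -/
def formEntry (M : CoxeterMatrix S) (s t : S) : ℝ :=
  if M s t = 0 then -1 else -Real.cos (Real.pi / (M s t : ℝ))

/-- The canonical symmetric bilinear form on `V = ⊕_{s ∈ S} ℝ·α_s`. -/
def bform (M : CoxeterMatrix S) : (S →₀ ℝ) →ₗ[ℝ] (S →₀ ℝ) →ₗ[ℝ] ℝ :=
  Finsupp.basisSingleOne.constr ℝ fun s =>
    Finsupp.basisSingleOne.constr ℝ fun t => formEntry M s t

variable [Group W]

/-- The root system `Φ = { w (α_s) : w ∈ W, s ∈ S }`. -/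
def rootSystem (ρ : W →* ((S →₀ ℝ) ≃ₗ[ℝ] (S →₀ ℝ))) : Set (S →₀ ℝ) :=
  Set.range fun p : W × S => ρ p.1 (simpleRoot p.2)

/-- A subset `𝒳 ⊆ V` is almost parabolic (AP): (AP1) the vectors of `𝒳` are linearly
independent, and (AP2) any two elements of `𝒳` are of the form `w (α_s)`, `w (α_t)` for a
common `w ∈ W`. -/
def IsAP (ρ : W →* ((S →₀ ℝ) ≃ₗ[ℝ] (S →₀ ℝ))) (𝒳 : Set (S →₀ ℝ)) : Prop :=
  LinearIndependent ℝ ((↑) : 𝒳 → (S →₀ ℝ)) ∧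
    ∀ β ∈ 𝒳, ∀ γ ∈ 𝒳, ∃ (w : W) (s t : S),
      ρ w (simpleRoot s) = β ∧ ρ w (simpleRoot t) = γ

/-- `g ∈ W` is a product of `n` elements of `T`. -/
def HasLen (T : Set W) (g : W) (n : ℕ) : Prop :=
  ∃ l : List W, (∀ x ∈ l, x ∈ T) ∧ l.prod = g ∧ l.length = n

/-- `u` has minimal word length (w.r.t. the generating set `T`) in the coset `u·H`. -/
def MinimalInCoset (T : Set W) (H : Subgroup W) (u : W) : Prop :=
  ∀ h ∈ H, ∀ m, HasLen T (u * h) m → ∃ n ≤ m, HasLen T u n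

section FormLemmas

variable {S : Type*} (M : CoxeterMatrix S)

lemma simpleRoot_eq_basis (s : S) :
    simpleRoot s = (Finsupp.basisSingleOne : Module.Basis S ℝ (S →₀ ℝ)) s := by
  simp [simpleRoot, Finsupp.coe_basisSingleOne]

lemma bform_simple_apply (s : S) (v : S →₀ ℝ) :
    bform M (simpleRoot s) v = v.sum fun t c => c * formEntry M s t := by
  rw [simpleRoot_eq_basis, bform, Module.Basis.constr_basis, Module.Basis.constr_apply]
  simp [smul_eq_mul]

lemma bform_simple_simple (s t : S) :
    bform M (simpleRoot s) (simpleRoot t) = formEntry M s t := by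
  rw [bform_simple_apply, simpleRoot, Finsupp.sum_single_index] <;> simp

lemma formEntry_symm (s t : S) : formEntry M s t = formEntry M t s := by
  rw [formEntry, formEntry, M.symmetric]

lemma formEntry_diag (s : S) : formEntry M s s = 1 := by
  rw [formEntry]
  simp [M.diagonal]

lemma bform_comm (v w : S →₀ ℝ) : bform M v w = bform M w v := by
  induction v using Finsupp.induction_linear with
  | zero => simp
  | add f g hf hg => simp [map_add, hf, hg]
  | single a b =>
    induction w using Finsupp.induction_linear with
    | zero => simp
    | add f g hf hg => simp [map_add, hf, hg]
    | single c d =>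
      have h1 : (Finsupp.single a b : S →₀ ℝ) = b • simpleRoot a := by
        simp [simpleRoot, Finsupp.smul_single]
      have h2 : (Finsupp.single c d : S →₀ ℝ) = d • simpleRoot c := by
        simp [simpleRoot, Finsupp.smul_single]
      rw [h1, h2]
      simp [map_smul, bform_simple_simple, formEntry_symm M a c]
      ring

end FormLemmas
section FormVals

variable {S : Type*} {M : CoxeterMatrix S}

lemma formEntry_of_two {s t : S} (h : M s t = 2) : formEntry M s t = 0 := by
  rw [formEntry, h]
  norm_num

lemma formEntry_of_three {s t : S} (h : M s t = 3) : formEntry M s t = -(1/2) := by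
  rw [formEntry, h]
  push_cast
  norm_num [Real.cos_pi_div_three]

lemma formEntry_cases (h23 : ∀ s t : S, s ≠ t → M s t = 2 ∨ M s t = 3) {s t : S} (h : s ≠ t) :
    formEntry M s t = 0 ∨ formEntry M s t = -(1/2) := by
  rcases h23 s t h with h2 | h3
  · exact Or.inl (formEntry_of_two h2)
  · exact Or.inr (formEntry_of_three h3)

lemma formEntry_nonpos (h23 : ∀ s t : S, s ≠ t → M s t = 2 ∨ M s t = 3) {s t : S} (h : s ≠ t) :
    formEntry M s t ≤ 0 := by
  rcases formEntry_cases h23 h with h0 | h0 <;> rw [h0] <;> norm_num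

lemma exists_int_two_formEntry (h23 : ∀ s t : S, s ≠ t → M s t = 2 ∨ M s t = 3) (s t : S) :
    ∃ k : ℤ, 2 * formEntry M s t = (k : ℝ) := by
  rcases eq_or_ne s t with rfl | h
  · exact ⟨2, by rw [formEntry_diag]; norm_num⟩
  · rcases formEntry_cases h23 h with h0 | h0
    · exact ⟨0, by rw [h0]; norm_num⟩
    · exact ⟨-1, by rw [h0]; norm_num⟩

/-- coordinatewise nonnegative -/
def PosVec (v : S →₀ ℝ) : Prop := ∀ u, 0 ≤ v u

/-- integer coordinates -/
def Integral (v : S →₀ ℝ) : Prop := ∀ u, ∃ n : ℤ, v u = (n : ℝ)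

lemma integral_two_bform (h23 : ∀ s t : S, s ≠ t → M s t = 2 ∨ M s t = 3)
    {v : S →₀ ℝ} (hv : Integral v) (s : S) :
    ∃ k : ℤ, 2 * bform M (simpleRoot s) v = (k : ℝ) := by
  choose n hn using hv
  choose k hk using fun t => exists_int_two_formEntry (M := M) h23 s t
  refine ⟨∑ t ∈ v.support, n t * k t, ?_⟩
  rw [bform_simple_apply, Finsupp.sum, Finset.mul_sum]
  push_cast
  refine Finset.sum_congr rfl fun t ht => ?_
  rw [← hn t, ← hk t]
  ring

end FormVals
section Rep

variable {S W : Type*} [Group W] {M : CoxeterMatrix S} {cs : CoxeterSystem M W}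
  {ρ : W →* ((S →₀ ℝ) ≃ₗ[ℝ] (S →₀ ℝ))} {r : (S →₀ ℝ) → W}

lemma rho_mul_apply (ρ : W →* ((S →₀ ℝ) ≃ₗ[ℝ] (S →₀ ℝ))) (w w' : W) (v : S →₀ ℝ) :
    ρ (w * w') v = ρ w (ρ w' v) := by rw [map_mul]; rfl

lemma rho_one_apply (ρ : W →* ((S →₀ ℝ) ≃ₗ[ℝ] (S →₀ ℝ))) (v : S →₀ ℝ) :
    ρ (1 : W) v = v := by rw [map_one]; rfl

lemma rho_inv_apply (ρ : W →* ((S →₀ ℝ) ≃ₗ[ℝ] (S →₀ ℝ))) (w : W) (v : S →₀ ℝ) :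
    ρ w (ρ w⁻¹ v) = v := by rw [← rho_mul_apply, mul_inv_cancel, rho_one_apply]

lemma simpleRoot_mem : simpleRoot s ∈ rootSystem ρ := ⟨(1, s), rho_one_apply ρ _⟩

lemma rho_mem_rootSystem {β : S →₀ ℝ} (hβ : β ∈ rootSystem ρ) (u : W) :
    ρ u β ∈ rootSystem ρ := by
  obtain ⟨⟨w, s⟩, rfl⟩ := hβ
  exact ⟨(u * w, s), rho_mul_apply ρ u w _⟩

lemma root_norm (hρform : ∀ (w : W) (x y : S →₀ ℝ), bform M (ρ w x) (ρ w y) = bform M x y)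
    {β : S →₀ ℝ} (hβ : β ∈ rootSystem ρ) : bform M β β = 1 := by
  obtain ⟨⟨w, s⟩, rfl⟩ := hβ
  rw [hρform, bform_simple_simple, formEntry_diag]

lemma rho_simple_self
    (hρ : ∀ (s : S) (v : S →₀ ℝ),
      ρ (cs.simple s) v = v - (2 * bform M (simpleRoot s) v) • simpleRoot s) (s : S) :
    ρ (cs.simple s) (simpleRoot s) = -simpleRoot s := by
  rw [hρ, bform_simple_simple, formEntry_diag]
  module

lemma neg_root_repr
    (hρ : ∀ (s : S) (v : S →₀ ℝ),
      ρ (cs.simple s) v = v - (2 * bform M (simpleRoot s) v) • simpleRoot s)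
    (w : W) (s : S) : -(ρ w (simpleRoot s)) = ρ (w * cs.simple s) (simpleRoot s) := by
  rw [rho_mul_apply, rho_simple_self hρ, map_neg]

lemma neg_mem_rootSystem
    (hρ : ∀ (s : S) (v : S →₀ ℝ),
      ρ (cs.simple s) v = v - (2 * bform M (simpleRoot s) v) • simpleRoot s)
    {β : S →₀ ℝ} (hβ : β ∈ rootSystem ρ) : -β ∈ rootSystem ρ := by
  obtain ⟨⟨w, s⟩, rfl⟩ := hβ
  exact ⟨(w * cs.simple s, s), (neg_root_repr hρ w s).symm⟩

lemma r_simpleRoot (hr : ∀ (w : W) (s : S), r (ρ w (simpleRoot s)) = w * cs.simple s * w⁻¹)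
    (s : S) : r (simpleRoot s) = cs.simple s := by
  have := hr 1 s
  rw [rho_one_apply] at this
  rw [this]
  group

lemma r_invol (hr : ∀ (w : W) (s : S), r (ρ w (simpleRoot s)) = w * cs.simple s * w⁻¹)
    {β : S →₀ ℝ} (hβ : β ∈ rootSystem ρ) : r β * r β = 1 := by
  obtain ⟨⟨w, s⟩, rfl⟩ := hβ
  rw [hr]
  have h := cs.simple_mul_simple_self s
  calc w * cs.simple s * w⁻¹ * (w * cs.simple s * w⁻¹)
      = w * (cs.simple s * cs.simple s) * w⁻¹ := by group
    _ = 1 := by rw [h]; group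

lemma r_neg
    (hρ : ∀ (s : S) (v : S →₀ ℝ),
      ρ (cs.simple s) v = v - (2 * bform M (simpleRoot s) v) • simpleRoot s)
    (hr : ∀ (w : W) (s : S), r (ρ w (simpleRoot s)) = w * cs.simple s * w⁻¹)
    {β : S →₀ ℝ} (hβ : β ∈ rootSystem ρ) : r (-β) = r β := by
  obtain ⟨⟨w, s⟩, rfl⟩ := hβ
  rw [neg_root_repr hρ, hr, hr]
  group

lemma r_conj
    (hr : ∀ (w : W) (s : S), r (ρ w (simpleRoot s)) = w * cs.simple s * w⁻¹)
    {β : S →₀ ℝ} (hβ : β ∈ rootSystem ρ) (u : W) : r (ρ u β) = u * r β * u⁻¹ := by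
  obtain ⟨⟨w, s⟩, rfl⟩ := hβ
  rw [← rho_mul_apply, hr, hr]
  group

lemma refl_apply
    (hρ : ∀ (s : S) (v : S →₀ ℝ),
      ρ (cs.simple s) v = v - (2 * bform M (simpleRoot s) v) • simpleRoot s)
    (hρform : ∀ (w : W) (x y : S →₀ ℝ), bform M (ρ w x) (ρ w y) = bform M x y)
    (hr : ∀ (w : W) (s : S), r (ρ w (simpleRoot s)) = w * cs.simple s * w⁻¹)
    {β : S →₀ ℝ} (hβ : β ∈ rootSystem ρ) (v : S →₀ ℝ) :
    ρ (r β) v = v - (2 * bform M β v) • β := by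
  obtain ⟨⟨w, s⟩, rfl⟩ := hβ
  rw [hr, rho_mul_apply, rho_mul_apply, hρ]
  rw [map_sub, map_smul, rho_inv_apply]
  have key : bform M (simpleRoot s) (ρ w⁻¹ v) = bform M (ρ w (simpleRoot s)) v := by
    rw [← hρform w (simpleRoot s) (ρ w⁻¹ v), rho_inv_apply]
  rw [key]

lemma refl_eq_pm {β γ : S →₀ ℝ} {M : CoxeterMatrix S}
    (hβn : bform M β β = 1) (hγn : bform M γ γ = 1)
    (h : ∀ v : S →₀ ℝ, v - (2 * bform M β v) • β = v - (2 * bform M γ v) • γ) :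
    β = γ ∨ β = -γ := by
  set d : ℝ := bform M γ β with hd
  have h1 : (2 * bform M β β) • β = (2 * d) • γ := sub_right_inj.mp (h β)
  rw [hβn] at h1
  have h2 : β = d • γ := by
    have h3 : (2:ℝ) • β = (2:ℝ) • (d • γ) := by
      rw [smul_smul]
      simpa using h1
    exact smul_right_injective _ (two_ne_zero) h3
  have h4 : d ^ 2 = 1 := by
    have : bform M β β = d ^ 2 * bform M γ γ := by
      rw [h2]
      simp only [map_smul, LinearMap.smul_apply, smul_eq_mul]
      ring
    rw [hβn, hγn] at this
    linarith
  have h5 : (d - 1) * (d + 1) = 0 := by nlinarith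
  rcases mul_eq_zero.mp h5 with h6 | h6
  · left
    have : d = 1 := by linarith
    rw [h2, this, one_smul]
  · right
    have : d = -1 := by linarith
    rw [h2, this]
    module

end Rep
section IntegralRoots

variable {S W : Type*} [Group W] {M : CoxeterMatrix S} {cs : CoxeterSystem M W}
  {ρ : W →* ((S →₀ ℝ) ≃ₗ[ℝ] (S →₀ ℝ))}

lemma integral_simpleRoot (s : S) : Integral (simpleRoot s) := by
  intro u
  by_cases h : s = u
  · exact ⟨1, by simp [simpleRoot, Finsupp.single_apply, h]⟩
  · exact ⟨0, by simp [simpleRoot, Finsupp.single_apply, h]⟩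

lemma integral_root
    (hρ : ∀ (s : S) (v : S →₀ ℝ),
      ρ (cs.simple s) v = v - (2 * bform M (simpleRoot s) v) • simpleRoot s)
    (h23 : ∀ s t : S, s ≠ t → M s t = 2 ∨ M s t = 3)
    {β : S →₀ ℝ} (hβ : β ∈ rootSystem ρ) : Integral β := by
  obtain ⟨⟨w, s⟩, rfl⟩ := hβ
  obtain ⟨ω, rfl⟩ := cs.wordProd_surjective w
  induction ω with
  | nil =>
    show Integral (ρ (cs.wordProd []) (simpleRoot s))
    rw [cs.wordProd_nil, rho_one_apply]
    exact integral_simpleRoot s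
  | cons i ω ih =>
    show Integral (ρ (cs.wordProd (i :: ω)) (simpleRoot s))
    rw [cs.wordProd_cons, rho_mul_apply, hρ]
    set x := ρ (cs.wordProd ω) (simpleRoot s) with hx
    obtain ⟨k, hk⟩ := integral_two_bform (M := M) h23 ih i
    intro u
    obtain ⟨n, hn⟩ := ih u
    obtain ⟨m, hm⟩ := integral_simpleRoot (S := S) i u
    refine ⟨n - k * m, ?_⟩
    rw [Finsupp.sub_apply, Finsupp.smul_apply, hn, hk, hm, smul_eq_mul]
    push_cast
    ring

end IntegralRoots

section PosNeg

variable {S : Type*}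

lemma posVec_simpleRoot (s : S) : PosVec (simpleRoot s) := by
  intro u
  by_cases h : s = u <;> simp [simpleRoot, Finsupp.single_apply, h]

lemma posVec_comb {x y : S →₀ ℝ} {a b : ℝ} (ha : 0 ≤ a) (hb : 0 ≤ b)
    (hx : PosVec x) (hy : PosVec y) : PosVec (a • x + b • y) := by
  intro u
  have := hx u
  have := hy u
  simp only [Finsupp.add_apply, Finsupp.smul_apply, smul_eq_mul]
  positivity

end PosNeg
section Dihedral

variable {S W : Type*} [Group W] {M : CoxeterMatrix S} {cs : CoxeterSystem M W}
  {ρ : W →* ((S →₀ ℝ) ≃ₗ[ℝ] (S →₀ ℝ))}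

lemma rho_simple_root
    (hρ : ∀ (s : S) (v : S →₀ ℝ),
      ρ (cs.simple s) v = v - (2 * bform M (simpleRoot s) v) • simpleRoot s)
    (t s : S) :
    ρ (cs.simple t) (simpleRoot s)
      = simpleRoot s - (2 * formEntry M t s) • simpleRoot t := by
  rw [hρ, bform_simple_simple]

lemma simple_ne
    (hρ : ∀ (s : S) (v : S →₀ ℝ),
      ρ (cs.simple s) v = v - (2 * bform M (simpleRoot s) v) • simpleRoot s)
    {s t : S} (hst : s ≠ t) : cs.simple s ≠ cs.simple t := by
  intro h
  have h1 : ρ (cs.simple s) (simpleRoot s) = ρ (cs.simple t) (simpleRoot s) := by rw [h]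
  rw [rho_simple_self hρ, rho_simple_root hρ] at h1
  have h2 := congrArg (fun v : S →₀ ℝ => v s) h1
  simp [simpleRoot, Finsupp.single_apply, Ne.symm hst] at h2
  linarith

lemma braid2 {s t : S} (h : M s t = 2) :
    cs.simple s * cs.simple t = cs.simple t * cs.simple s := by
  have h1 := cs.simple_mul_simple_pow s t
  rw [h] at h1
  have h2 : (cs.simple s * cs.simple t) * (cs.simple s * cs.simple t) = 1 := by
    rw [← sq]; exact h1
  have h3 := eq_inv_of_mul_eq_one_left h2
  rw [mul_inv_rev, cs.inv_simple, cs.inv_simple] at h3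
  exact h3

lemma braid3 {s t : S} (h : M s t = 3) :
    cs.simple s * cs.simple t * cs.simple s = cs.simple t * cs.simple s * cs.simple t := by
  have h1 := cs.simple_mul_simple_pow s t
  rw [h] at h1
  have e3 : (cs.simple s * cs.simple t)^3 = cs.simple s * cs.simple t * cs.simple s *
      (cs.simple t * cs.simple s * cs.simple t) := by
    rw [pow_succ, pow_succ, pow_one]
    simp [mul_assoc]
  have h2 : (cs.simple s * cs.simple t * cs.simple s) *
      (cs.simple t * cs.simple s * cs.simple t) = 1 := by rw [← e3]; exact h1
  have h3 := eq_inv_of_mul_eq_one_left h2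
  rw [h3, mul_inv_rev, mul_inv_rev]
  simp [cs.inv_simple, mul_assoc]

/-- The six (not necessarily distinct) elements of the dihedral subgroup. -/
def DihE (cs : CoxeterSystem M W) (s t : S) (x : W) : Prop :=
  x = 1 ∨ x = cs.simple s ∨ x = cs.simple t ∨ x = cs.simple s * cs.simple t ∨
    x = cs.simple t * cs.simple s ∨ x = cs.simple s * cs.simple t * cs.simple s

lemma dihE_mulS {s t : S} (hm : M s t = 2 ∨ M s t = 3) {x : W} (hx : DihE cs s t x) :
    DihE cs s t (x * cs.simple s) := by
  rcases hx with rfl | rfl | rfl | rfl | rfl | rfl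
  · right; left; rw [one_mul]
  · left; exact cs.simple_mul_simple_self s
  · right; right; right; right; left; rfl
  · right; right; right; right; right; rfl
  · right; right; left; exact cs.simple_mul_simple_cancel_right s
  · right; right; right; left; exact cs.simple_mul_simple_cancel_right s

lemma dihE_mulT {s t : S} (hm : M s t = 2 ∨ M s t = 3) {x : W} (hx : DihE cs s t x) :
    DihE cs s t (x * cs.simple t) := by
  rcases hx with rfl | rfl | rfl | rfl | rfl | rfl
  · right; right; left; rw [one_mul]
  · right; right; right; left; rfl
  · left; exact cs.simple_mul_simple_self t
  · right; left; exact cs.simple_mul_simple_cancel_right t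
  · rcases hm with h2 | h3
    · right; left
      rw [mul_assoc, braid2 h2, cs.simple_mul_simple_cancel_left]
    · right; right; right; right; right
      exact (braid3 h3).symm
  · rcases hm with h2 | h3
    · left
      have e : cs.simple s * cs.simple t * cs.simple s = cs.simple t := by
        rw [braid2 h2, cs.simple_mul_simple_cancel_right]
      rw [e, cs.simple_mul_simple_self]
    · right; right; right; right; left
      calc cs.simple s * cs.simple t * cs.simple s * cs.simple t
          = cs.simple s * (cs.simple t * cs.simple s * cs.simple t) := by simp [mul_assoc]
        _ = cs.simple s * (cs.simple s * (cs.simple t * cs.simple s)) := by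
            rw [← braid3 h3]; simp [mul_assoc]
        _ = cs.simple t * cs.simple s := cs.simple_mul_simple_cancel_left s

lemma mem_dihE (hm : M s t = 2 ∨ M s t = 3) {u : W}
    (hu : u ∈ Subgroup.closure {cs.simple s, cs.simple t}) : DihE cs s t u := by
  induction hu using Subgroup.closure_induction_right with
  | one => left; rfl
  | mul_right x hx y hy ih =>
    rcases hy with rfl | rfl
    · exact dihE_mulS hm ih
    · exact dihE_mulT hm ih
  | mul_inv_cancel x hx y hy ih =>
    rcases hy with rfl | rfl
    · rw [cs.inv_simple]; exact dihE_mulS hm ih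
    · rw [cs.inv_simple]; exact dihE_mulT hm ih

end Dihedral
section PosTheorem

variable {S W : Type*} [Group W] {M : CoxeterMatrix S} {cs : CoxeterSystem M W}
  {ρ : W →* ((S →₀ ℝ) ≃ₗ[ℝ] (S →₀ ℝ))}

lemma length_simple_mul_simple
    (hρ : ∀ (s : S) (v : S →₀ ℝ),
      ρ (cs.simple s) v = v - (2 * bform M (simpleRoot s) v) • simpleRoot s)
    {s t : S} (hst : s ≠ t) : cs.length (cs.simple s * cs.simple t) = 2 := by
  rcases cs.length_mul_simple (cs.simple s) t with h | h
  · rw [cs.length_simple] at h; exact h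
  · exfalso
    rw [cs.length_simple] at h
    have h0 : cs.length (cs.simple s * cs.simple t) = 0 := by omega
    have h1 : cs.simple s * cs.simple t = 1 := cs.length_eq_zero_iff.mp h0
    have h2 := eq_inv_of_mul_eq_one_left h1
    rw [cs.inv_simple] at h2
    exact simple_ne hρ hst h2

lemma key_dihedral
    (hρ : ∀ (s : S) (v : S →₀ ℝ),
      ρ (cs.simple s) v = v - (2 * bform M (simpleRoot s) v) • simpleRoot s)
    (h23 : ∀ s t : S, s ≠ t → M s t = 2 ∨ M s t = 3)
    {s t : S} (hst : s ≠ t) {u : W}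
    (hu : u ∈ Subgroup.closure {cs.simple s, cs.simple t})
    (hd : ¬ cs.IsRightDescent u s) :
    ∃ a b : ℝ, 0 ≤ a ∧ 0 ≤ b ∧
      ρ u (simpleRoot s) = a • simpleRoot s + b • simpleRoot t := by
  have hm := h23 s t hst
  have hmts : M t s = 2 ∨ M t s = 3 := by rw [M.symmetric t s]; exact hm
  have hfts : formEntry M t s ≤ 0 := formEntry_nonpos h23 (Ne.symm hst)
  rcases mem_dihE hm hu with rfl | rfl | rfl | rfl | rfl | rfl
  · exact ⟨1, 0, by norm_num, by norm_num, by rw [rho_one_apply]; module⟩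
  · exfalso
    apply hd
    show cs.length _ < cs.length _
    rw [cs.simple_mul_simple_self, cs.length_one, cs.length_simple]
    norm_num
  · refine ⟨1, -(2 * formEntry M t s), by norm_num, by linarith, ?_⟩
    rw [rho_simple_root hρ]
    module
  · rcases hm with h2 | h3
    · exfalso
      apply hd
      show cs.length _ < cs.length _
      have e : cs.simple s * cs.simple t * cs.simple s = cs.simple t := by
        rw [braid2 h2, cs.simple_mul_simple_cancel_right]
      rw [e, cs.length_simple, length_simple_mul_simple hρ hst]
      norm_num
    · have hts3 : M t s = 3 := by rw [M.symmetric t s]; exact h3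
      refine ⟨0, 1, by norm_num, by norm_num, ?_⟩
      rw [rho_mul_apply, rho_simple_root hρ, formEntry_of_three hts3]
      rw [map_sub, map_smul, rho_simple_self hρ, rho_simple_root hρ, formEntry_of_three h3]
      module
  · exfalso
    apply hd
    show cs.length _ < cs.length _
    rw [cs.simple_mul_simple_cancel_right, cs.length_simple,
      length_simple_mul_simple hρ (Ne.symm hst)]
    norm_num
  · rcases hm with h2 | h3
    · have hts2 : M t s = 2 := by rw [M.symmetric t s]; exact h2
      have e : cs.simple s * cs.simple t * cs.simple s = cs.simple t := by
        rw [braid2 h2, cs.simple_mul_simple_cancel_right]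
      refine ⟨1, 0, by norm_num, by norm_num, ?_⟩
      rw [e, rho_simple_root hρ, formEntry_of_two hts2]
      module
    · exfalso
      have hts3 : M t s = 3 := by rw [M.symmetric t s]; exact h3
      have hl : cs.length (cs.simple s * cs.simple t * cs.simple s * cs.simple s) = 2 := by
        rw [cs.simple_mul_simple_cancel_right]
        exact length_simple_mul_simple hρ hst
      have hnd := cs.not_isRightDescent_iff.mp hd
      rw [hl] at hnd
      have hu1 : cs.length (cs.simple s * cs.simple t * cs.simple s) = 1 := by omega
      obtain ⟨i, hi⟩ := cs.length_eq_one_iff.mp hu1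
      have hv : ρ (cs.simple s * cs.simple t * cs.simple s) (simpleRoot s)
          = -(simpleRoot t) := by
        rw [rho_mul_apply, rho_mul_apply, rho_simple_self hρ, map_neg,
          rho_simple_root hρ, formEntry_of_three hts3, map_neg, map_sub, map_smul,
          rho_simple_self hρ, rho_simple_root hρ, formEntry_of_three h3]
        module
      rw [hi, rho_simple_root hρ] at hv
      have hco := congrArg (fun v : S →₀ ℝ => v s) hv
      by_cases his : i = s
      · subst his
        rw [formEntry_diag] at hco
        simp [simpleRoot, Finsupp.single_apply, Ne.symm hst] at hco
        linarith
      · simp [simpleRoot, Finsupp.single_apply, Ne.symm hst, his] at hco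

lemma coset_min (s t : S) (w : W) :
    ∃ v u : W, w = v * u ∧ u ∈ Subgroup.closure {cs.simple s, cs.simple t} ∧
      cs.length w = cs.length v + cs.length u ∧
      ¬ cs.IsRightDescent v s ∧ ¬ cs.IsRightDescent v t := by
  generalize hn : cs.length w = n
  induction n using Nat.strong_induction_on generalizing w with
  | _ n IH =>
  by_cases hs : cs.IsRightDescent w s
  · have hlen : cs.length (w * cs.simple s) < n := by rw [← hn]; exact hs
    obtain ⟨v, u, he, hmem, hadd, hv1, hv2⟩ := IH _ hlen (w * cs.simple s) rfl
    refine ⟨v, u * cs.simple s, ?_, ?_, ?_, hv1, hv2⟩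
    · rw [← mul_assoc, ← he, cs.simple_mul_simple_cancel_right]
    · exact mul_mem hmem (Subgroup.subset_closure (by left; rfl))
    · have h1 : cs.length (u * cs.simple s) ≤ cs.length u + 1 := by
        have := cs.length_mul_le u (cs.simple s)
        rwa [cs.length_simple] at this
      have h2 : n ≤ cs.length v + cs.length (u * cs.simple s) := by
        rw [← hn, show w = v * (u * cs.simple s) by
          rw [← mul_assoc, ← he, cs.simple_mul_simple_cancel_right]]
        exact cs.length_mul_le v (u * cs.simple s)
      have h3 : cs.length (w * cs.simple s) + 1 = n := by
        rw [← hn]; exact cs.isRightDescent_iff.mp hs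
      omega
  · by_cases ht : cs.IsRightDescent w t
    · have hlen : cs.length (w * cs.simple t) < n := by rw [← hn]; exact ht
      obtain ⟨v, u, he, hmem, hadd, hv1, hv2⟩ := IH _ hlen (w * cs.simple t) rfl
      refine ⟨v, u * cs.simple t, ?_, ?_, ?_, hv1, hv2⟩
      · rw [← mul_assoc, ← he, cs.simple_mul_simple_cancel_right]
      · exact mul_mem hmem (Subgroup.subset_closure (by right; rfl))
      · have h1 : cs.length (u * cs.simple t) ≤ cs.length u + 1 := by
          have := cs.length_mul_le u (cs.simple t)
          rwa [cs.length_simple] at this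
        have h2 : n ≤ cs.length v + cs.length (u * cs.simple t) := by
          rw [← hn, show w = v * (u * cs.simple t) by
            rw [← mul_assoc, ← he, cs.simple_mul_simple_cancel_right]]
          exact cs.length_mul_le v (u * cs.simple t)
        have h3 : cs.length (w * cs.simple t) + 1 = n := by
          rw [← hn]; exact cs.isRightDescent_iff.mp ht
        omega
    · exact ⟨w, 1, by rw [mul_one], one_mem _, by simp [cs.length_one, hn], hs, ht⟩

theorem posB
    (hρ : ∀ (s : S) (v : S →₀ ℝ),
      ρ (cs.simple s) v = v - (2 * bform M (simpleRoot s) v) • simpleRoot s)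
    (h23 : ∀ s t : S, s ≠ t → M s t = 2 ∨ M s t = 3)
    (w : W) (s : S) (hnd : ¬ cs.IsRightDescent w s) : PosVec (ρ w (simpleRoot s)) := by
  generalize hn : cs.length w = n
  induction n using Nat.strong_induction_on generalizing w s with
  | _ n IH =>
  by_cases hw1 : w = 1
  · subst hw1; rw [rho_one_apply]; exact posVec_simpleRoot s
  obtain ⟨t, hdt⟩ := cs.exists_rightDescent_of_ne_one hw1
  have hst : s ≠ t := by rintro rfl; exact hnd hdt
  obtain ⟨v, u, he, hmem, hadd, hv1, hv2⟩ := coset_min (cs := cs) s t w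
  have hu1 : u ≠ 1 := by
    rintro rfl
    rw [mul_one] at he
    rw [he] at hdt
    exact hv2 hdt
  have hul : 1 ≤ cs.length u := by
    rcases Nat.eq_zero_or_pos (cs.length u) with h0 | h0
    · exact absurd (cs.length_eq_zero_iff.mp h0) hu1
    · exact h0
  have hvlt : cs.length v < n := by omega
  have hus : ¬ cs.IsRightDescent u s := by
    intro hd
    apply hnd
    show cs.length (w * cs.simple s) < cs.length w
    have h1 : cs.length (u * cs.simple s) + 1 = cs.length u := cs.isRightDescent_iff.mp hd
    have h2 : cs.length (w * cs.simple s) ≤ cs.length v + cs.length (u * cs.simple s) := by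
      rw [he, mul_assoc]
      exact cs.length_mul_le v (u * cs.simple s)
    omega
  obtain ⟨a, b, ha, hb, hab⟩ := key_dihedral hρ h23 hst hmem hus
  have h5 : ρ w (simpleRoot s) = a • ρ v (simpleRoot s) + b • ρ v (simpleRoot t) := by
    rw [he, rho_mul_apply, hab, map_add, map_smul, map_smul]
  rw [h5]
  exact posVec_comb ha hb (IH _ hvlt v s hv1 rfl) (IH _ hvlt v t hv2 rfl)

theorem negB
    (hρ : ∀ (s : S) (v : S →₀ ℝ),
      ρ (cs.simple s) v = v - (2 * bform M (simpleRoot s) v) • simpleRoot s)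
    (h23 : ∀ s t : S, s ≠ t → M s t = 2 ∨ M s t = 3)
    (w : W) (s : S) (hd : cs.IsRightDescent w s) :
    ∀ u, (ρ w (simpleRoot s)) u ≤ 0 := by
  have hnd : ¬ cs.IsRightDescent (w * cs.simple s) s :=
    (cs.isRightDescent_iff_not_isRightDescent_mul).mp hd
  have hp := posB hρ h23 (w * cs.simple s) s hnd
  have he : ρ (w * cs.simple s) (simpleRoot s) = -(ρ w (simpleRoot s)) := by
    rw [rho_mul_apply, rho_simple_self hρ, map_neg]
  rw [he] at hp
  intro u
  have := hp u
  rw [Finsupp.neg_apply] at this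
  linarith

end PosTheorem
section MainPrep

variable {S W : Type*} [Group W] {M : CoxeterMatrix S} {cs : CoxeterSystem M W}
  {ρ : W →* ((S →₀ ℝ) ≃ₗ[ℝ] (S →₀ ℝ))} {r : (S →₀ ℝ) → W}

lemma half_eq {x y : S →₀ ℝ} (h : x - y = -x) : x = (2⁻¹ : ℝ) • y := by
  have h2 : x + x - y = 0 := by rw [add_sub_assoc, h, add_neg_cancel]
  have h3 : x + x = y := sub_eq_zero.mp h2
  rw [← h3]
  module

lemma orthonormal_int_pair {a b : ℝ} (ha : ∃ p : ℤ, 2 * a = (p : ℝ))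
    (hb : ∃ q : ℤ, 2 * b = (q : ℝ)) (h : a ^ 2 + b ^ 2 = 1) :
    ((a = 1 ∨ a = -1) ∧ b = 0) ∨ (a = 0 ∧ (b = 1 ∨ b = -1)) := by
  obtain ⟨p, hp⟩ := ha
  obtain ⟨q, hq⟩ := hb
  have hpq : p ^ 2 + q ^ 2 = 4 := by
    have h4 : ((p : ℝ)) ^ 2 + ((q : ℝ)) ^ 2 = 4 := by
      rw [← hp, ← hq]; nlinarith
    exact_mod_cast h4
  have hp1 : -2 ≤ p := by nlinarith [sq_nonneg q]
  have hp2 : p ≤ 2 := by nlinarith [sq_nonneg q]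
  have hq1 : -2 ≤ q := by nlinarith [sq_nonneg p]
  have hq2 : q ≤ 2 := by nlinarith [sq_nonneg p]
  interval_cases p <;> interval_cases q <;> norm_num at hpq <;> norm_num at hp hq ⊢ <;>
    first
      | exact Or.inl ⟨Or.inl (by linarith), by linarith⟩
      | exact Or.inl ⟨Or.inr (by linarith), by linarith⟩
      | exact Or.inr ⟨by linarith, Or.inl (by linarith)⟩
      | exact Or.inr ⟨by linarith, Or.inr (by linarith)⟩

lemma r_ne_one
    (hρ : ∀ (s : S) (v : S →₀ ℝ),
      ρ (cs.simple s) v = v - (2 * bform M (simpleRoot s) v) • simpleRoot s)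
    (hρform : ∀ (w : W) (x y : S →₀ ℝ), bform M (ρ w x) (ρ w y) = bform M x y)
    (hr : ∀ (w : W) (s : S), r (ρ w (simpleRoot s)) = w * cs.simple s * w⁻¹)
    {β : S →₀ ℝ} (hβ : β ∈ rootSystem ρ) : r β ≠ 1 := by
  intro h1
  have hn := root_norm hρform hβ
  have h2 : ρ (r β) β = β - (2 * bform M β β) • β := refl_apply hρ hρform hr hβ β
  rw [h1, rho_one_apply, hn] at h2
  have h3 : (2 * (1:ℝ)) • β = 0 := sub_eq_self.mp h2.symm
  have hβ0 : β = 0 := by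
    rcases smul_eq_zero.mp h3 with h | h
    · norm_num at h
    · exact h
  rw [hβ0] at hn
  simp at hn

lemma eq_pm_of_r_eq
    (hρ : ∀ (s : S) (v : S →₀ ℝ),
      ρ (cs.simple s) v = v - (2 * bform M (simpleRoot s) v) • simpleRoot s)
    (hρform : ∀ (w : W) (x y : S →₀ ℝ), bform M (ρ w x) (ρ w y) = bform M x y)
    (hr : ∀ (w : W) (s : S), r (ρ w (simpleRoot s)) = w * cs.simple s * w⁻¹)
    {β γ : S →₀ ℝ} (hβ : β ∈ rootSystem ρ) (hγ : γ ∈ rootSystem ρ)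
    (h : r β = r γ) : β = γ ∨ β = -γ := by
  apply refl_eq_pm (root_norm hρform hβ) (root_norm hρform hγ)
  intro v
  rw [← refl_apply hρ hρform hr hβ v, ← refl_apply hρ hρform hr hγ v, h]

lemma descent_fix
    (hρ : ∀ (s : S) (v : S →₀ ℝ),
      ρ (cs.simple s) v = v - (2 * bform M (simpleRoot s) v) • simpleRoot s)
    (hρform : ∀ (w : W) (x y : S →₀ ℝ), bform M (ρ w x) (ρ w y) = bform M x y)
    (h23 : ∀ s t : S, s ≠ t → M s t = 2 ∨ M s t = 3)
    {z : W} (hz : z * z = 1) {s : S} (hd : cs.IsRightDescent z s)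
    (hnd : ¬ cs.length (cs.simple s * z * cs.simple s) < cs.length z) :
    ρ z (simpleRoot s) = -simpleRoot s := by
  have hzi : z⁻¹ = z := inv_eq_of_mul_eq_one_right hz
  have hinv : (cs.simple s * z)⁻¹ = z * cs.simple s := by
    rw [mul_inv_rev, hzi, cs.inv_simple]
  have hlsz : cs.length (cs.simple s * z) + 1 = cs.length z := by
    have h1 : cs.length (cs.simple s * z) = cs.length (z * cs.simple s) := by
      rw [← cs.length_inv (cs.simple s * z), hinv]
    rw [h1]
    exact cs.isRightDescent_iff.mp hd
  have hx : ¬ cs.IsRightDescent (cs.simple s * z) s := by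
    intro h
    have h2 := cs.isRightDescent_iff.mp h
    exact hnd (by omega)
  have hp := posB hρ h23 (cs.simple s * z) s hx
  have hnn := negB hρ h23 z s hd
  set v := ρ z (simpleRoot s) with hv
  have hxv : ρ (cs.simple s * z) (simpleRoot s)
      = v - (2 * bform M (simpleRoot s) v) • simpleRoot s := by
    rw [rho_mul_apply, hρ]
  have hu0 : ∀ u, u ≠ s → v u = 0 := by
    intro u hu
    have h1 := hp u
    rw [hxv] at h1
    have h2 : (v - (2 * bform M (simpleRoot s) v) • simpleRoot s) u = v u := by
      rw [Finsupp.sub_apply, Finsupp.smul_apply]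
      simp [simpleRoot, Finsupp.single_apply, Ne.symm hu]
    rw [h2] at h1
    exact le_antisymm (hnn u) h1
  have hvs : v = (v s) • simpleRoot s := by
    ext u
    by_cases hu : u = s
    · subst hu; simp [simpleRoot, Finsupp.single_apply]
    · rw [hu0 u hu]
      simp [simpleRoot, Finsupp.single_apply, Ne.symm hu, hu]
  have hn1 : bform M v v = 1 := by
    rw [hv, hρform, bform_simple_simple, formEntry_diag]
  rw [hvs] at hn1
  simp only [map_smul, LinearMap.smul_apply, smul_eq_mul, bform_simple_simple,
    formEntry_diag] at hn1
  have hvs2 : v s ≤ 0 := hnn s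
  have hm1 : v s = -1 := by nlinarith
  rw [hvs, hm1]
  module

end MainPrep
section MainPrep2

variable {S W : Type*} [Group W] {M : CoxeterMatrix S} {cs : CoxeterSystem M W}
  {ρ : W →* ((S →₀ ℝ) ≃ₗ[ℝ] (S →₀ ℝ))} {r : (S →₀ ℝ) → W}

lemma z_action
    (hρ : ∀ (s : S) (v : S →₀ ℝ),
      ρ (cs.simple s) v = v - (2 * bform M (simpleRoot s) v) • simpleRoot s)
    (hρform : ∀ (w : W) (x y : S →₀ ℝ), bform M (ρ w x) (ρ w y) = bform M x y)
    (hr : ∀ (w : W) (s : S), r (ρ w (simpleRoot s)) = w * cs.simple s * w⁻¹)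
    {β β' : S →₀ ℝ} (hβ : β ∈ rootSystem ρ) (hβ' : β' ∈ rootSystem ρ)
    (horth : bform M β β' = 0) (v : S →₀ ℝ) :
    ρ (r β * r β') v = v - (2 * bform M β v) • β - (2 * bform M β' v) • β' := by
  rw [rho_mul_apply, refl_apply hρ hρform hr hβ', refl_apply hρ hρform hr hβ]
  simp only [map_sub, map_smul, smul_eq_mul, horth]
  module

lemma orth_of_comm
    (hρ : ∀ (s : S) (v : S →₀ ℝ),
      ρ (cs.simple s) v = v - (2 * bform M (simpleRoot s) v) • simpleRoot s)
    (hρform : ∀ (w : W) (x y : S →₀ ℝ), bform M (ρ w x) (ρ w y) = bform M x y)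
    (hr : ∀ (w : W) (s : S), r (ρ w (simpleRoot s)) = w * cs.simple s * w⁻¹)
    {β β' : S →₀ ℝ} (hβ : β ∈ rootSystem ρ) (hβ' : β' ∈ rootSystem ρ)
    (hne : r β ≠ r β') (hcomm : r β * r β' = r β' * r β) :
    bform M β β' = 0 := by
  have hβn := root_norm hρform hβ
  have hβ'n := root_norm hρform hβ'
  set c := bform M β β' with hc
  have hcc : bform M β' β = c := by rw [hc, bform_comm]
  have hconj : r β * r β' * r β = r β' := by
    rw [hcomm, mul_assoc, r_invol hr hβ, mul_one]
  set γ := β' - (2 * c) • β with hγd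
  have hγroot : γ = ρ (r β) β' := by rw [refl_apply hρ hρform hr hβ β', hγd]
  have hγn : bform M γ γ = 1 := by rw [hγroot, hρform]; exact hβ'n
  have key : ∀ v, v - (2 * bform M γ v) • γ = v - (2 * bform M β' v) • β' := by
    intro v
    have e1 : ρ (r β * r β' * r β) v = ρ (r β') v := by rw [hconj]
    rw [rho_mul_apply, rho_mul_apply] at e1
    rw [refl_apply hρ hρform hr hβ v, refl_apply hρ hρform hr hβ',
      refl_apply hρ hρform hr hβ, refl_apply hρ hρform hr hβ'] at e1
    rw [← e1, hγd]
    simp only [map_sub, map_smul, LinearMap.sub_apply, LinearMap.smul_apply,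
      smul_eq_mul, hβn, hβ'n, hcc, ← hc] at e1 ⊢
    module
  rcases refl_eq_pm hγn hβ'n key with h | h
  · -- γ = β' : β' - 2c β = β' ⇒ c = 0
    have h2 : (2 * c) • β = 0 := by
      have h3 : β' - (2 * c) • β = β' := by rw [← hγd, h]
      exact sub_eq_self.mp h3
    rcases smul_eq_zero.mp h2 with h3 | h3
    · linarith
    · exfalso
      rw [h3] at hβn
      simp at hβn
  · -- γ = -β' : β' = c β, contradiction
    exfalso
    have h2 : β' - (2 * c) • β = -β' := by rw [← hγd, h]
    have h3 : β' = c • β := by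
      rw [half_eq h2, smul_smul]
      module
    have h4 : c ^ 2 = 1 := by
      have h5 : bform M β' β' = c ^ 2 * bform M β β := by
        rw [h3]
        simp only [map_smul, LinearMap.smul_apply, smul_eq_mul]
        ring
      rw [hβn, hβ'n] at h5
      linarith
    have h6 : (c - 1) * (c + 1) = 0 := by nlinarith
    rcases mul_eq_zero.mp h6 with h7 | h7
    · have hc1 : c = 1 := by linarith
      rw [hc1, one_smul] at h3
      rw [h3] at hne
      exact hne rfl
    · have hc1 : c = -1 := by linarith
      have h8 : β' = -β := by rw [h3, hc1]; module
      rw [h8] at hne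
      exact hne (r_neg hρ hr hβ).symm

lemma orth_simple_of_pm {β β' : S →₀ ℝ} (horth : bform M β β' = 0) {s t : S}
    (hb : β = simpleRoot s ∨ β = -simpleRoot s)
    (hb' : β' = simpleRoot t ∨ β' = -simpleRoot t) :
    bform M (simpleRoot s) (simpleRoot t) = 0 := by
  rcases hb with rfl | rfl <;> rcases hb' with rfl | rfl <;> simpa using horth

lemma finish_pair
    (hρ : ∀ (s : S) (v : S →₀ ℝ),
      ρ (cs.simple s) v = v - (2 * bform M (simpleRoot s) v) • simpleRoot s)
    {s t : S} (horth : bform M (simpleRoot s) (simpleRoot t) = 0)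
    {β β' : S →₀ ℝ} (hb : β = simpleRoot s ∨ β = -simpleRoot s)
    (hb' : β' = simpleRoot t ∨ β' = -simpleRoot t) :
    ∃ (w : W) (u v : S), ρ w (simpleRoot u) = β ∧ ρ w (simpleRoot v) = β' := by
  have hfe : formEntry M s t = 0 := by rw [← bform_simple_simple M s t]; exact horth
  have hfets : formEntry M t s = 0 := by rw [formEntry_symm]; exact hfe
  have hst' : ρ (cs.simple s) (simpleRoot t) = simpleRoot t := by
    rw [rho_simple_root hρ, hfe]; module
  have hts' : ρ (cs.simple t) (simpleRoot s) = simpleRoot s := by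
    rw [rho_simple_root hρ, hfets]; module
  rcases hb with rfl | rfl <;> rcases hb' with rfl | rfl
  · exact ⟨1, s, t, rho_one_apply ρ _, rho_one_apply ρ _⟩
  · exact ⟨cs.simple t, s, t, hts', by rw [rho_simple_self hρ]⟩
  · exact ⟨cs.simple s, s, t, by rw [rho_simple_self hρ], hst'⟩
  · refine ⟨cs.simple s * cs.simple t, s, t, ?_, ?_⟩
    · rw [rho_mul_apply, hts', rho_simple_self hρ]
    · rw [rho_mul_apply, rho_simple_self hρ, map_neg, hst']

end MainPrep2
section MainAux

variable {S W : Type*} [Group W]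

theorem main_aux (M : CoxeterMatrix S) (cs : CoxeterSystem M W)
    (ρ : W →* ((S →₀ ℝ) ≃ₗ[ℝ] (S →₀ ℝ)))
    (hρ : ∀ (s : S) (v : S →₀ ℝ),
      ρ (cs.simple s) v = v - (2 * bform M (simpleRoot s) v) • simpleRoot s)
    (hρform : ∀ (w : W) (x y : S →₀ ℝ), bform M (ρ w x) (ρ w y) = bform M x y)
    (r : (S →₀ ℝ) → W)
    (hr : ∀ (w : W) (s : S), r (ρ w (simpleRoot s)) = w * cs.simple s * w⁻¹)
    (h23 : ∀ s t : S, s ≠ t → M s t = 2 ∨ M s t = 3) (n : ℕ) :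
    ∀ β β' : S →₀ ℝ, β ∈ rootSystem ρ → β' ∈ rootSystem ρ →
      r β ≠ r β' → r β * r β' = r β' * r β → cs.length (r β * r β') = n →
      ∃ (w : W) (s t : S), ρ w (simpleRoot s) = β ∧ ρ w (simpleRoot t) = β' := by
  induction n using Nat.strong_induction_on with
  | _ n IH =>
  intro β β' hβ hβ' hne hcomm hlen
  have hβn := root_norm hρform hβ
  have hβ'n := root_norm hρform hβ'
  have horth := orth_of_comm hρ hρform hr hβ hβ' hne hcomm
  set z := r β * r β' with hzd
  have hcm : r β * r β' = r β' * r β := by rw [← hzd]; exact hcomm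
  have hc2 : r β' * z = r β := by
    rw [hcomm, ← mul_assoc, r_invol hr hβ', one_mul]
  have hz2 : z * z = 1 := by
    have ha : z * z = r β * (r β' * z) := by rw [hzd]; simp [mul_assoc]
    rw [ha, hc2, r_invol hr hβ]
  have hz1 : z ≠ 1 := by
    intro h
    have h1 : r β * r β' = 1 := by rw [← hzd]; exact h
    have h3 := eq_inv_of_mul_eq_one_left h1
    rw [inv_eq_of_mul_eq_one_right (r_invol hr hβ')] at h3
    exact hne h3
  have recurse : ∀ u : S, cs.length (cs.simple u * z * cs.simple u) < cs.length z →
      ∃ (w : W) (s t : S), ρ w (simpleRoot s) = β ∧ ρ w (simpleRoot t) = β' := by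
    intro u hlt
    have hβ1 : ρ (cs.simple u) β ∈ rootSystem ρ := rho_mem_rootSystem hβ _
    have hβ1' : ρ (cs.simple u) β' ∈ rootSystem ρ := rho_mem_rootSystem hβ' _
    have hrc : r (ρ (cs.simple u) β) = cs.simple u * r β * (cs.simple u)⁻¹ := r_conj hr hβ _
    have hrc' : r (ρ (cs.simple u) β') = cs.simple u * r β' * (cs.simple u)⁻¹ := r_conj hr hβ' _
    have hprod : r (ρ (cs.simple u) β) * r (ρ (cs.simple u) β')
        = cs.simple u * z * cs.simple u := by
      rw [hrc, hrc', hzd, cs.inv_simple]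
      have hu := cs.simple_mul_simple_self u
      calc cs.simple u * r β * cs.simple u * (cs.simple u * r β' * cs.simple u)
          = cs.simple u * r β * (cs.simple u * cs.simple u) * r β' * cs.simple u := by
            simp [mul_assoc]
        _ = cs.simple u * (r β * r β') * cs.simple u := by rw [hu]; simp [mul_assoc]
        _ = cs.simple u * z * cs.simple u := by rw [hzd]
    have hne1 : r (ρ (cs.simple u) β) ≠ r (ρ (cs.simple u) β') := by
      intro h
      rw [hrc, hrc'] at h
      exact hne (mul_left_cancel (mul_right_cancel h))
    have hcomm1 : r (ρ (cs.simple u) β) * r (ρ (cs.simple u) β')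
        = r (ρ (cs.simple u) β') * r (ρ (cs.simple u) β) := by
      rw [hrc, hrc', cs.inv_simple]
      calc cs.simple u * r β * cs.simple u * (cs.simple u * r β' * cs.simple u)
          = cs.simple u * (r β * (cs.simple u * cs.simple u) * r β') * cs.simple u := by
            simp [mul_assoc]
        _ = cs.simple u * (r β' * (cs.simple u * cs.simple u) * r β) * cs.simple u := by
            rw [cs.simple_mul_simple_self, mul_one, mul_one, hcm]
        _ = cs.simple u * r β' * cs.simple u * (cs.simple u * r β * cs.simple u) := by
            rw [cs.simple_mul_simple_self, mul_one]
            simp [mul_assoc]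
    have hltn : cs.length (cs.simple u * z * cs.simple u) < n := by
      rw [← hlen]; exact hlt
    obtain ⟨w1, s1, t1, e1, e2⟩ := IH _ hltn (ρ (cs.simple u) β) (ρ (cs.simple u) β')
      hβ1 hβ1' hne1 hcomm1 (by rw [hprod])
    refine ⟨cs.simple u * w1, s1, t1, ?_, ?_⟩
    · rw [rho_mul_apply, e1, ← rho_mul_apply, cs.simple_mul_simple_self, rho_one_apply]
    · rw [rho_mul_apply, e2, ← rho_mul_apply, cs.simple_mul_simple_self, rho_one_apply]
  have zact := z_action hρ hρform hr hβ hβ' horth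
  have fixcore : ∀ u : S, ρ z (simpleRoot u) = -simpleRoot u →
      (β = simpleRoot u ∨ β = -simpleRoot u) ∨
      (β' = simpleRoot u ∨ β' = -simpleRoot u) := by
    intro u hfix
    set a := bform M β (simpleRoot u) with had
    set b := bform M β' (simpleRoot u) with hbd
    have heq0 : simpleRoot u - ((2 * a) • β + (2 * b) • β') = -simpleRoot u := by
      have h1 := zact (simpleRoot u)
      rw [hfix] at h1
      rw [sub_sub] at h1
      exact h1.symm
    have heq : simpleRoot u = a • β + b • β' := by
      rw [half_eq heq0]
      module
    have hnorm : a ^ 2 + b ^ 2 = 1 := by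
      have h1 : bform M (simpleRoot u) (simpleRoot u) = 1 := by
        rw [bform_simple_simple, formEntry_diag]
      rw [heq] at h1
      have hc1 : bform M β' β = 0 := by rw [bform_comm]; exact horth
      simp only [map_add, map_smul, LinearMap.add_apply, LinearMap.smul_apply,
        smul_eq_mul, hβn, hβ'n, horth, hc1] at h1
      nlinarith [h1]
    have hai : ∃ p : ℤ, 2 * a = (p : ℝ) := by
      rw [had, bform_comm]
      exact integral_two_bform h23 (integral_root hρ h23 hβ) u
    have hbi : ∃ q : ℤ, 2 * b = (q : ℝ) := by
      rw [hbd, bform_comm]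
      exact integral_two_bform h23 (integral_root hρ h23 hβ') u
    rcases orthonormal_int_pair hai hbi hnorm with ⟨ha1, hb0⟩ | ⟨ha0, hb1⟩
    · left
      rcases ha1 with ha | ha
      · left
        rw [heq, ha, hb0]
        module
      · right
        rw [heq, ha, hb0]
        module
    · right
      rcases hb1 with hb | hb
      · left
        rw [heq, ha0, hb]
        module
      · right
        rw [heq, ha0, hb]
        module
  -- second stage, for the case where β (resp. β') is ± a simple root
  have core2 : ∀ u : S, cs.IsRightDescent z u →
      (β = simpleRoot u ∨ β = -simpleRoot u) →
      ∃ (w : W) (s t : S), ρ w (simpleRoot s) = β ∧ ρ w (simpleRoot t) = β' := by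
    intro s₀ hd₀ hb
    have hrβ : r β = cs.simple s₀ := by
      rcases hb with rfl | rfl
      · exact r_simpleRoot hr s₀
      · rw [r_neg hρ hr simpleRoot_mem]
        exact r_simpleRoot hr s₀
    have hrβ'e : r β' = z * cs.simple s₀ := by
      rw [hzd, hcm, hrβ, mul_assoc, cs.simple_mul_simple_self, mul_one]
    have hlrβ' : cs.length (r β') + 1 = cs.length z := by
      rw [hrβ'e]
      exact cs.isRightDescent_iff.mp hd₀
    by_cases hl1 : cs.length (r β') = 1
    · obtain ⟨u, hu⟩ := cs.length_eq_one_iff.mp hl1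
      have hb' : β' = simpleRoot u ∨ β' = -simpleRoot u := by
        apply eq_pm_of_r_eq hρ hρform hr hβ' simpleRoot_mem
        rw [hu, r_simpleRoot hr]
      exact finish_pair hρ (orth_simple_of_pm horth hb hb') hb hb'
    · have hrβ'1 : r β' ≠ 1 := r_ne_one hρ hρform hr hβ'
      obtain ⟨t, hdt'⟩ := cs.exists_rightDescent_of_ne_one hrβ'1
      have h2 := cs.isRightDescent_iff.mp hdt'
      have hts₀ : t ≠ s₀ := by
        rintro rfl
        have h3 : r β' * cs.simple t = z := by
          rw [hrβ'e, cs.simple_mul_simple_cancel_right]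
        rw [h3] at h2
        omega
      have hdzt : cs.IsRightDescent z t := by
        show cs.length (z * cs.simple t) < cs.length z
        have hz' : z = cs.simple s₀ * r β' := by rw [hzd, hrβ]
        have h4 : cs.length (z * cs.simple t)
            ≤ cs.length (cs.simple s₀) + cs.length (r β' * cs.simple t) := by
          rw [hz', mul_assoc]
          exact cs.length_mul_le _ _
        rw [cs.length_simple] at h4
        omega
      by_cases hlt2 : cs.length (cs.simple t * z * cs.simple t) < cs.length z
      · exact recurse t hlt2
      · have hfixt := descent_fix hρ hρform h23 hz2 hdzt hlt2
        rcases fixcore t hfixt with hbt | hb't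
        · exfalso
          have hcontr : simpleRoot s₀ = simpleRoot t ∨ simpleRoot s₀ = -simpleRoot t := by
            rcases hb with h5 | h5 <;> rcases hbt with h6 | h6
            · left; rw [← h5, h6]
            · right; rw [← h5, h6]
            · right
              have h7 : -simpleRoot s₀ = simpleRoot t := by rw [← h5, h6]
              rw [← h7]; module
            · left
              have h7 : -simpleRoot s₀ = -simpleRoot t := by rw [← h5, h6]
              have h8 := congrArg Neg.neg h7
              simpa using h8
          rcases hcontr with h5 | h5 <;>
          · have h6 := congrArg (fun v : S →₀ ℝ => v t) h5
            simp [simpleRoot, Finsupp.single_apply, Ne.symm hts₀] at h6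
        · exact finish_pair hρ (orth_simple_of_pm horth hb hb't) hb hb't
  obtain ⟨s₀, hd₀⟩ := cs.exists_rightDescent_of_ne_one hz1
  by_cases hlt : cs.length (cs.simple s₀ * z * cs.simple s₀) < cs.length z
  · exact recurse s₀ hlt
  · have hfix₀ := descent_fix hρ hρform h23 hz2 hd₀ hlt
    rcases fixcore s₀ hfix₀ with hb | hb'
    · exact core2 s₀ hd₀ hb
    · -- symmetric case: swap β and β'
      have hd₀' : cs.IsRightDescent (r β' * r β) s₀ := by rw [← hcomm]; exact hd₀
      have hz2' : (r β' * r β) * (r β' * r β) = 1 := by rw [← hcomm]; exact hz2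
      -- apply the swapped version of core2 manually
      have hrβ' : r β' = cs.simple s₀ := by
        rcases hb' with rfl | rfl
        · exact r_simpleRoot hr s₀
        · rw [r_neg hρ hr simpleRoot_mem]
          exact r_simpleRoot hr s₀
      have hrβe : r β = z * cs.simple s₀ := by
        rw [hzd, hrβ', mul_assoc, cs.simple_mul_simple_self, mul_one]
      have hlrβ : cs.length (r β) + 1 = cs.length z := by
        rw [hrβe]
        exact cs.isRightDescent_iff.mp hd₀
      by_cases hl1 : cs.length (r β) = 1
      · obtain ⟨u, hu⟩ := cs.length_eq_one_iff.mp hl1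
        have hb2 : β = simpleRoot u ∨ β = -simpleRoot u := by
          apply eq_pm_of_r_eq hρ hρform hr hβ simpleRoot_mem
          rw [hu, r_simpleRoot hr]
        obtain ⟨w, uu, vv, e1, e2⟩ := finish_pair hρ
          (orth_simple_of_pm (by rw [bform_comm]; exact horth) hb' hb2) hb' hb2
        exact ⟨w, vv, uu, e2, e1⟩
      · have hrβ1 : r β ≠ 1 := r_ne_one hρ hρform hr hβ
        obtain ⟨t, hdt'⟩ := cs.exists_rightDescent_of_ne_one hrβ1
        have h2 := cs.isRightDescent_iff.mp hdt'
        have hts₀ : t ≠ s₀ := by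
          rintro rfl
          have h3 : r β * cs.simple t = z := by
            rw [hrβe, cs.simple_mul_simple_cancel_right]
          rw [h3] at h2
          omega
        have hdzt : cs.IsRightDescent z t := by
          show cs.length (z * cs.simple t) < cs.length z
          have hz' : z = cs.simple s₀ * r β := by rw [hzd, hcm, hrβ']
          have h4 : cs.length (z * cs.simple t)
              ≤ cs.length (cs.simple s₀) + cs.length (r β * cs.simple t) := by
            rw [hz', mul_assoc]
            exact cs.length_mul_le _ _
          rw [cs.length_simple] at h4
          omega
        by_cases hlt2 : cs.length (cs.simple t * z * cs.simple t) < cs.length z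
        · exact recurse t hlt2
        · have hfixt := descent_fix hρ hρform h23 hz2 hdzt hlt2
          rcases fixcore t hfixt with hbt | hb't
          · obtain ⟨w, uu, vv, e1, e2⟩ := finish_pair hρ
              (orth_simple_of_pm (by rw [bform_comm]; exact horth) hb' hbt) hb' hbt
            exact ⟨w, vv, uu, e2, e1⟩
          · exfalso
            have hcontr : simpleRoot s₀ = simpleRoot t ∨ simpleRoot s₀ = -simpleRoot t := by
              rcases hb' with h5 | h5 <;> rcases hb't with h6 | h6
              · left; rw [← h5, h6]
              · right; rw [← h5, h6]
              · right
                have h7 : -simpleRoot s₀ = simpleRoot t := by rw [← h5, h6]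
                rw [← h7]; module
              · left
                have h7 : -simpleRoot s₀ = -simpleRoot t := by rw [← h5, h6]
                have h8 := congrArg Neg.neg h7
                simpa using h8
            rcases hcontr with h5 | h5 <;>
            · have h6 := congrArg (fun v : S →₀ ℝ => v t) h5
              simp [simpleRoot, Finsupp.single_apply, Ne.symm hts₀] at h6

end MainAux
/-- Assume `m_{s,t} ∈ {2,3}` for all distinct `s, t ∈ S`.  Let
`β, β' ∈ Φ` be roots whose reflections `r_β` and `r_{β'}` are distinct and commute.  Then
there exist `w ∈ W` and `s, t ∈ S` with `β = w (α_s)` and `β' = w (α_t)`. -/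
theorem statement15
    (M : CoxeterMatrix S) (cs : CoxeterSystem M W)
    (ρ : W →* ((S →₀ ℝ) ≃ₗ[ℝ] (S →₀ ℝ)))
    (hρ : ∀ (s : S) (v : S →₀ ℝ),
      ρ (cs.simple s) v = v - (2 * bform M (simpleRoot s) v) • simpleRoot s)
    (hρinj : Function.Injective ρ)
    (hρform : ∀ (w : W) (x y : S →₀ ℝ), bform M (ρ w x) (ρ w y) = bform M x y)
    (r : (S →₀ ℝ) → W)
    (hr : ∀ (w : W) (s : S), r (ρ w (simpleRoot s)) = w * cs.simple s * w⁻¹)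
    (h23 : ∀ s t : S, s ≠ t → M s t = 2 ∨ M s t = 3)
    (β β' : S →₀ ℝ) (hβ : β ∈ rootSystem ρ) (hβ' : β' ∈ rootSystem ρ)
    (hne : r β ≠ r β') (hcomm : r β * r β' = r β' * r β) :
    ∃ (w : W) (s t : S), ρ w (simpleRoot s) = β ∧ ρ w (simpleRoot t) = β' :=
  main_aux M cs ρ hρ hρform r hr h23 (cs.length (r β * r β')) β β' hβ hβ' hne hcomm rfl
end
end
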